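/- arXiv:2007.01996 — 6 statements merged into one kernel-verified Lean document; each statement's English description precedes it below -/
import Mathlib

section
/- For every real number μ with 0 < μ < 1, the quantity maxS(μ,β) attains its minimum over β ∈ ℝ, the minimum value is 1 − √(1−μ), and the minimum is attained exactly at the unique point β = βopt(μ) = (1−√(1−μ))/(1+√(1−μ)). Concretely: (i) maxS(μ,β) ≥ 1 − √(1−μ) for all β ∈ ℝ; (ii) maxS(μ, βopt(μ)) = 1 − √(1−μ); (iii) if maxS(μ,β) = 1 − √(1−μ) for some β ∈ ℝ, then β = βopt(μ). -/
/-- The maximum of the moduli of the two complex roots (counted with multiplicity) of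
`λ² − (1+β)·μ·λ + β·μ = 0`; the roots are given by the quadratic formula
`((1+β)μ ± √((1+β)²μ² − 4βμ))/2` (complex square root via `cpow`). -/
noncomputable def maxS (μ β : ℝ) : ℝ :=
  max (Norm.norm (((((1 + β) * μ : ℝ) : ℂ) +
        ((((1 + β) ^ 2 * μ ^ 2 - 4 * β * μ : ℝ) : ℂ)) ^ ((1 : ℂ) / 2)) / 2))
      (Norm.norm (((((1 + β) * μ : ℝ) : ℂ) -
        ((((1 + β) ^ 2 * μ ^ 2 - 4 * β * μ : ℝ) : ℂ)) ^ ((1 : ℂ) / 2)) / 2))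

/-- The optimal coefficient `βopt(μ) = (1 − √(1−μ))/(1 + √(1−μ))`. -/
noncomputable def βopt (μ : ℝ) : ℝ := (1 - Real.sqrt (1 - μ)) / (1 + Real.sqrt (1 - μ))

lemma max_abs_add_sub (a d : ℝ) (hd : 0 ≤ d) : max (|a + d|) (|a - d|) = |a| + d := by
  apply le_antisymm
  · apply max_le
    · calc |a + d| ≤ |a| + |d| := abs_add_le a d
        _ = |a| + d := by rw [abs_of_nonneg hd]
    · calc |a - d| ≤ |a| + |d| := abs_sub a d
        _ = |a| + d := by rw [abs_of_nonneg hd]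
  · rcases le_total 0 a with ha | ha
    · rw [abs_of_nonneg ha]
      exact le_max_of_le_left (by rw [abs_of_nonneg (by linarith)])
    · rw [abs_of_nonpos ha]
      exact le_max_of_le_right (le_of_eq (by rw [abs_of_nonpos (by linarith)]; ring))

lemma maxS_of_nonneg (μ β : ℝ) (hD : 0 ≤ (1 + β) ^ 2 * μ ^ 2 - 4 * β * μ) :
    maxS μ β = (|(1 + β) * μ| + Real.sqrt ((1 + β) ^ 2 * μ ^ 2 - 4 * β * μ)) / 2 := by
  set D := (1 + β) ^ 2 * μ ^ 2 - 4 * β * μ with hDdef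
  set a := (1 + β) * μ with hadef
  have hw : (((D:ℝ):ℂ)) ^ ((1:ℂ)/2) = ((Real.sqrt D : ℝ) : ℂ) := by
    rw [Real.sqrt_eq_rpow, Complex.ofReal_cpow hD]; norm_num
  have h1 : ((a:ℂ) + (((D:ℝ):ℂ)) ^ ((1:ℂ)/2)) / 2 = (((a/2 + Real.sqrt D/2) : ℝ) : ℂ) := by
    rw [hw]; push_cast; ring
  have h2 : ((a:ℂ) - (((D:ℝ):ℂ)) ^ ((1:ℂ)/2)) / 2 = (((a/2 - Real.sqrt D/2) : ℝ) : ℂ) := by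
    rw [hw]; push_cast; ring
  unfold maxS
  rw [← hDdef, ← hadef, h1, h2, Complex.norm_real, Complex.norm_real, Real.norm_eq_abs, Real.norm_eq_abs,
    max_abs_add_sub (a/2) (Real.sqrt D / 2) (by positivity), abs_div, abs_two]
  ring

lemma maxS_of_neg (μ β : ℝ) (hD : (1 + β) ^ 2 * μ ^ 2 - 4 * β * μ < 0) :
    maxS μ β = Real.sqrt (β * μ) := by
  set D := (1 + β) ^ 2 * μ ^ 2 - 4 * β * μ with hDdef
  set a := (1 + β) * μ with hadef
  set w := (((D:ℝ):ℂ)) ^ ((1:ℂ)/2) with hwdef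
  have hw2 : w ^ 2 = (D:ℂ) := by
    have := Complex.cpow_nat_inv_pow ((D:ℝ):ℂ) (n := 2) (by norm_num)
    simpa [one_div, hwdef] using this
  have him : w.re * w.im + w.im * w.re = 0 := by
    have := congrArg Complex.im hw2
    simpa [pow_two, Complex.mul_im] using this
  have hre : w.re * w.re - w.im * w.im = D := by
    have := congrArg Complex.re hw2
    simpa [pow_two, Complex.mul_re] using this
  have hwre : w.re = 0 := by
    by_contra h
    have hwim : w.im = 0 := by
      have h0 : w.re * w.im = 0 := by linarith
      rcases mul_eq_zero.1 h0 with h' | h'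
      · exact absurd h' h
      · exact h'
    rw [hwim] at hre
    nlinarith [mul_self_nonneg w.re]
  have hwim2 : w.im * w.im = -D := by rw [hwre] at hre; nlinarith
  have habs : ∀ z : ℂ, z.re = a ∧ z.im * z.im = -D → ‖z‖ = Real.sqrt (a^2 - D) := by
    intro z ⟨h1, h2⟩
    rw [Complex.norm_def, Complex.normSq_apply, h1, h2]
    congr 1; ring
  have hβμ : 0 < β * μ := by nlinarith
  have hs4 : Real.sqrt (a^2 - D) = 2 * Real.sqrt (β * μ) := by
    have key : a^2 - D = 2^2 * (β * μ) := by rw [hDdef, hadef]; ring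
    rw [key, Real.sqrt_mul (by positivity), Real.sqrt_sq (by norm_num)]
  have e1 : ‖(a:ℂ) + w‖ = Real.sqrt (a^2 - D) :=
    habs _ ⟨by simp [hwre], by simpa using hwim2⟩
  have e2 : ‖(a:ℂ) - w‖ = Real.sqrt (a^2 - D) :=
    habs _ ⟨by simp [hwre], by simpa [neg_mul_neg] using hwim2⟩
  unfold maxS
  rw [← hDdef, ← hadef, ← hwdef, norm_div, norm_div, e1, e2, hs4, Complex.norm_two, max_self]
  ring

theorem stmt0 (μ : ℝ) (h0 : 0 < μ) (h1 : μ < 1) :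
    (∀ β : ℝ, 1 - Real.sqrt (1 - μ) ≤ maxS μ β) ∧
    maxS μ (βopt μ) = 1 - Real.sqrt (1 - μ) ∧
    (∀ β : ℝ, maxS μ β = 1 - Real.sqrt (1 - μ) → β = βopt μ) := by
  set s := Real.sqrt (1 - μ) with hsdef
  have hs0 : 0 < s := Real.sqrt_pos.2 (by linarith)
  have hs2 : s ^ 2 = 1 - μ := Real.sq_sqrt (by linarith)
  have hs1 : s < 1 := by nlinarith
  have hμ : μ = 1 - s ^ 2 := by linarith
  have h1s : (0:ℝ) < 1 + s := by linarith
  have hβo : βopt μ = (1 - s) / (1 + s) := by rw [βopt, hsdef]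
  have hβμ : βopt μ * μ = (1 - s) ^ 2 := by
    rw [hβo, hμ]; field_simp; ring
  -- generic facts for fixed β
  have hDfact : ∀ β : ℝ, (1 + β) ^ 2 * μ ^ 2 - 4 * β * μ
      = (β * μ - (1 - s) ^ 2) * (β * μ - (1 + s) ^ 2) := by
    intro β; rw [hμ]; ring
  have hid : ∀ β : ℝ, ((1 + β) ^ 2 * μ ^ 2 - 4 * β * μ)
      - (2 * (1 - s) - (1 + β) * μ) ^ 2 = 4 * s * ((1 - s) ^ 2 - β * μ) := by
    intro β; rw [hμ]; ring
  -- strict lower bound in the complex-roots case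
  have hneg : ∀ β : ℝ, (1 + β) ^ 2 * μ ^ 2 - 4 * β * μ < 0 → 1 - s < maxS μ β := by
    intro β hD
    rw [maxS_of_neg μ β hD]
    have ht : (1 - s) ^ 2 < β * μ := by
      by_contra h
      push_neg at h
      nlinarith [hDfact β, mul_nonneg (by nlinarith : (0:ℝ) ≤ (1-s)^2 - β*μ)
        (by nlinarith : (0:ℝ) ≤ (1+s)^2 - β*μ)]
    exact Real.lt_sqrt (by linarith) |>.2 ht
  -- in the real-roots case with large t
  have hbig : ∀ β : ℝ, 0 ≤ (1 + β) ^ 2 * μ ^ 2 - 4 * β * μ → (1 + s) ^ 2 ≤ β * μ →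
      1 + s ≤ maxS μ β := by
    intro β hD htbig
    rw [maxS_of_nonneg μ β hD]
    have ha : (1 + β) * μ = μ + β * μ := by ring
    have h2 : 2 * (1 + s) ≤ (1 + β) * μ := by rw [ha, hμ]; nlinarith
    have := le_abs_self ((1 + β) * μ)
    have := Real.sqrt_nonneg ((1 + β) ^ 2 * μ ^ 2 - 4 * β * μ)
    linarith
  -- in the real-roots case with small t
  have hsmall : ∀ β : ℝ, 0 ≤ (1 + β) ^ 2 * μ ^ 2 - 4 * β * μ → β * μ ≤ (1 - s) ^ 2 →
      2 * (1 - s) - (1 + β) * μ ≤ Real.sqrt ((1 + β) ^ 2 * μ ^ 2 - 4 * β * μ) := by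
    intro β hD htsmall
    apply Real.le_sqrt_of_sq_le
    nlinarith [hid β, hs0]
  -- case split on sign of the discriminant and the two t-regimes
  have hcases : ∀ β : ℝ, 0 ≤ (1 + β) ^ 2 * μ ^ 2 - 4 * β * μ →
      β * μ ≤ (1 - s) ^ 2 ∨ (1 + s) ^ 2 ≤ β * μ := by
    intro β hD
    by_contra h
    push_neg at h
    nlinarith [hDfact β, mul_pos (by nlinarith : (0:ℝ) < β*μ - (1-s)^2)
      (by nlinarith : (0:ℝ) < (1+s)^2 - β*μ)]
  have hlow : ∀ β : ℝ, 1 - s ≤ maxS μ β := by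
    intro β
    rcases lt_or_ge ((1 + β) ^ 2 * μ ^ 2 - 4 * β * μ) 0 with hD | hD
    · linarith [hneg β hD]
    · rcases hcases β hD with ht | ht
      · rw [maxS_of_nonneg μ β hD]
        have := hsmall β hD ht
        have := le_abs_self ((1 + β) * μ)
        linarith
      · linarith [hbig β hD ht]
  refine ⟨hlow, ?_, ?_⟩
  · -- value at βopt
    have hD0 : (1 + βopt μ) ^ 2 * μ ^ 2 - 4 * (βopt μ) * μ = 0 := by
      rw [hDfact (βopt μ), hβμ]; ring
    have ha : (1 + βopt μ) * μ = 2 * (1 - s) := by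
      have : μ + βopt μ * μ = 2 * (1 - s) := by rw [hβμ, hμ]; ring
      linarith [this]
    rw [maxS_of_nonneg μ (βopt μ) (le_of_eq hD0.symm), hD0, Real.sqrt_zero, ha,
      abs_of_nonneg (by linarith)]
    ring
  · -- uniqueness
    intro β hmax
    rcases lt_or_ge ((1 + β) ^ 2 * μ ^ 2 - 4 * β * μ) 0 with hD | hD
    · linarith [hneg β hD]
    · rcases hcases β hD with ht | ht
      · have h2 := hsmall β hD ht
        have habs := le_abs_self ((1 + β) * μ)
        have hmax' := maxS_of_nonneg μ β hD
        rw [hmax] at hmax'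
        -- (|a| + √D)/2 = 1 - s  and  √D ≥ 2(1-s) - a  force √D = 2(1-s) - a
        have hsq : Real.sqrt ((1 + β) ^ 2 * μ ^ 2 - 4 * β * μ) = 2 * (1 - s) - (1 + β) * μ := by
          linarith
        have hDval : (1 + β) ^ 2 * μ ^ 2 - 4 * β * μ
            = (2 * (1 - s) - (1 + β) * μ) ^ 2 := by
          rw [← hsq, Real.sq_sqrt hD]
        have htval : β * μ = (1 - s) ^ 2 := by nlinarith [hid β, hs0]
        have : β * μ = βopt μ * μ := by rw [htval, hβμ]
        exact mul_right_cancel₀ (by positivity) this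
      · linarith [hbig β hD ht]
end

section
/- For all real numbers μ₁, μ₂ with μ₂ < μ₁ < 0, the optimal values satisfy both: (i) min_{β∈ℝ} maxS(μ₁,β) < min_{β∈ℝ} maxS(μ₂,β), i.e. √(1−μ₁) − 1 < √(1−μ₂) − 1; and (ii) maxS(μ₁, βopt(μ₂)) < √(1−μ₂) − 1, i.e. evaluating the first quantity at the coefficient optimal for μ₂ gives a value strictly smaller than the optimal value for μ₂. -/
lemma cpow_half_of_neg {x : ℝ} (hx : x < 0) :
    ((x : ℂ)) ^ ((1 : ℂ) / 2) = (Real.sqrt (-x) : ℂ) * Complex.I := by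
  rw [Complex.ofReal_cpow_of_nonpos hx.le]
  have h1 : (-(x : ℂ)) ^ ((1 : ℂ) / 2) = (Real.sqrt (-x) : ℂ) := by
    have : ((1 : ℂ)/2) = ((1/2 : ℝ) : ℂ) := by norm_num
    rw [this, ← Complex.ofReal_neg, ← Complex.ofReal_cpow (by linarith)]
    rw [Real.sqrt_eq_rpow]
  have h2 : Complex.exp ((Real.pi : ℂ) * Complex.I * ((1:ℂ)/2)) = Complex.I := by
    have : (Real.pi : ℂ) * Complex.I * ((1:ℂ)/2) = ((Real.pi/2 : ℝ) : ℂ) * Complex.I := by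
      push_cast; ring
    rw [this, Complex.exp_mul_I]
    push_cast
    rw [Complex.cos_pi_div_two, Complex.sin_pi_div_two]
    ring
  rw [h1, h2]

lemma maxS_eq {μ β : ℝ} (hD : (1 + β) ^ 2 * μ ^ 2 - 4 * β * μ < 0) :
    maxS μ β = Real.sqrt (β * μ) := by
  unfold maxS
  rw [cpow_half_of_neg hD]
  set a : ℝ := (1 + β) * μ with ha
  set b : ℝ := Real.sqrt (-((1 + β) ^ 2 * μ ^ 2 - 4 * β * μ)) with hb
  have hb2 : b ^ 2 = -((1 + β) ^ 2 * μ ^ 2 - 4 * β * μ) :=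
    Real.sq_sqrt (by linarith)
  have e1 : ((a : ℂ) + (b : ℂ) * Complex.I) / 2 = (((a/2 : ℝ)) : ℂ) + ((b/2 : ℝ) : ℂ) * Complex.I := by
    push_cast; ring
  have e2 : ((a : ℂ) - (b : ℂ) * Complex.I) / 2 = (((a/2 : ℝ)) : ℂ) + ((-b/2 : ℝ) : ℂ) * Complex.I := by
    push_cast; ring
  rw [e1, e2, Complex.norm_add_mul_I, Complex.norm_add_mul_I]
  have h3 : (a/2) ^ 2 + (b/2) ^ 2 = β * μ := by
    rw [ha]; linear_combination hb2 / 4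
  have h4 : (a/2) ^ 2 + (-b/2) ^ 2 = β * μ := by
    rw [ha]; linear_combination hb2 / 4
  simp_all

theorem stmt4 (μ₁ μ₂ : ℝ) (h21 : μ₂ < μ₁) (h1 : μ₁ < 0) :
    Real.sqrt (1 - μ₁) - 1 < Real.sqrt (1 - μ₂) - 1 ∧
    maxS μ₁ (βopt μ₂) < Real.sqrt (1 - μ₂) - 1 := by
  set s := Real.sqrt (1 - μ₂) with hs
  have hs2 : s ^ 2 = 1 - μ₂ := Real.sq_sqrt (by linarith)
  have hs1 : 1 < s := by
    nlinarith [hs2, Real.sqrt_nonneg (1 - μ₂), hs]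
  have hs0 : (0:ℝ) < 1 + s := by linarith
  set β := βopt μ₂ with hβ
  have hβval : β = (1 - s) / (1 + s) := rfl
  have h1β : 1 + β = 2 / (1 + s) := by
    rw [hβval]; field_simp; ring
  have hβneg : β < 0 := div_neg_of_neg_of_pos (by linarith) hs0
  have key : (1 + β) ^ 2 * μ₂ = 4 * β := by
    rw [h1β, hβval]
    field_simp
    linear_combination 4 * hs2
  have h1βpos : 0 < 1 + β := by rw [h1β]; positivity
  have hD : (1 + β) ^ 2 * μ₁ ^ 2 - 4 * β * μ₁ < 0 := by
    have : (1 + β) ^ 2 * μ₁ ^ 2 - 4 * β * μ₁ = (1 + β) ^ 2 * μ₁ * (μ₁ - μ₂) := by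
      linear_combination μ₁ * key
    rw [this]
    have hp : (0:ℝ) < (1 + β) ^ 2 := by positivity
    nlinarith [mul_neg_of_pos_of_neg (mul_pos hp (sub_pos.mpr h21)) h1]
  constructor
  · have : Real.sqrt (1 - μ₁) < s := Real.sqrt_lt_sqrt (by linarith) (by linarith)
    linarith
  · rw [maxS_eq hD]
    have hβμ₂ : β * μ₂ = (s - 1) ^ 2 := by
      rw [hβval]
      rw [div_mul_eq_mul_div, div_eq_iff (by linarith)]
      linear_combination (1 - s) * hs2
    have hlt : β * μ₁ < β * μ₂ := by
      exact mul_lt_mul_of_neg_left h21 hβneg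
    calc Real.sqrt (β * μ₁) < Real.sqrt (β * μ₂) := by
          apply Real.sqrt_lt_sqrt (by nlinarith) hlt
      _ = s - 1 := by rw [hβμ₂]; exact Real.sqrt_sq (by linarith)
end

section
/- Let M be an n×n complex matrix and β ∈ ℂ. A complex number λ is an eigenvalue of the 2n×2n block matrix T(M,β) = [[(1+β)M, −βM],[Iₙ, 0]] if and only if there exists an eigenvalue μ of M such that λ² − (1+β)μλ + βμ = 0. -/
/-- `lam` is an eigenvalue of the square complex matrix `A`. -/
def IsEigenvalue {n : Type*} [Fintype n] (A : Matrix n n ℂ) (lam : ℂ) : Prop :=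
  ∃ v : n → ℂ, v ≠ 0 ∧ A.mulVec v = lam • v

/-- The block matrix `T(M,β) = [[(1+β)M, −βM],[I, 0]]` (Jacobian of sAA(1)). -/
noncomputable def Tblock {n : ℕ} (M : Matrix (Fin n) (Fin n) ℂ) (β : ℂ) :
    Matrix (Fin n ⊕ Fin n) (Fin n ⊕ Fin n) ℂ :=
  Matrix.fromBlocks ((1 + β) • M) ((-β) • M) (1 : Matrix (Fin n) (Fin n) ℂ) 0

lemma exists_eig {n : ℕ} (hn : Nonempty (Fin n)) (M : Matrix (Fin n) (Fin n) ℂ) :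
    ∃ μ, IsEigenvalue M μ := by
  have : Nontrivial (Fin n → ℂ) := Function.nontrivial
  obtain ⟨μ, hμ⟩ := Module.End.exists_eigenvalue (Matrix.toLin' M)
  obtain ⟨v, hv⟩ := hμ.exists_hasEigenvector
  exact ⟨μ, v, hv.2, by rw [← Matrix.toLin'_apply]; exact hv.apply_eq_smul⟩

theorem stmt7 (n : ℕ) (M : Matrix (Fin n) (Fin n) ℂ) (β lam : ℂ) :
    IsEigenvalue (Tblock M β) lam ↔
      ∃ μ : ℂ, IsEigenvalue M μ ∧ lam ^ 2 - (1 + β) * μ * lam + β * μ = 0 := by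
  constructor
  · rintro ⟨v, hv, hEq⟩
    set u : Fin n → ℂ := v ∘ Sum.inl with hu
    set w : Fin n → ℂ := v ∘ Sum.inr with hwdef
    have hvelim : v = Sum.elim u w := by funext x; cases x <;> rfl
    rw [hvelim, Tblock, Matrix.fromBlocks_mulVec] at hEq
    have h1 : ((1 + β) • M).mulVec u + ((-β) • M).mulVec w = lam • u := by
      funext i; have := congrFun hEq (Sum.inl i); simpa using this
    have h2 : u = lam • w := by
      funext i; have := congrFun hEq (Sum.inr i)
      simpa [Matrix.one_mulVec, Matrix.zero_mulVec] using this
    have hw0 : w ≠ 0 := by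
      intro h
      apply hv
      rw [hvelim]
      funext x
      cases x with
      | inl i => simp [h2, h]
      | inr i => simp [h]
    rw [h2] at h1
    have key : ((1 + β) * lam - β) • M.mulVec w = (lam ^ 2) • w := by
      have h3 := h1
      rw [Matrix.mulVec_smul, Matrix.smul_mulVec, Matrix.smul_mulVec,
        smul_smul, smul_smul] at h3
      calc ((1 + β) * lam - β) • M.mulVec w
          = (lam * (1 + β)) • M.mulVec w + (-β) • M.mulVec w := by
            rw [← add_smul]; congr 1; ring
        _ = (lam * lam) • w := h3
        _ = lam ^ 2 • w := by rw [sq]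
    by_cases hc : (1 + β) * lam - β = 0
    · rw [hc, zero_smul] at key
      obtain ⟨i, hi⟩ := Function.ne_iff.mp hw0
      have : lam ^ 2 * w i = 0 := by
        have := congrFun key.symm i; simpa using this
      have hlam : lam = 0 := by
        have := mul_eq_zero.mp this
        rcases this with h | h
        · exact pow_eq_zero_iff (n := 2) (by norm_num) |>.mp h
        · exact absurd h hi
      have hβ : β = 0 := by
        rw [hlam] at hc; simpa using hc.symm
      obtain ⟨μ, hμ⟩ := exists_eig ⟨i⟩ M
      exact ⟨μ, hμ, by rw [hlam, hβ]; ring⟩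
    · refine ⟨lam ^ 2 / ((1 + β) * lam - β), ⟨w, hw0, ?_⟩, ?_⟩
      · have := congrArg (fun x => ((1 + β) * lam - β)⁻¹ • x) key
        simpa [smul_smul, inv_mul_cancel₀ hc, div_eq_inv_mul] using this
      · rw [div_eq_mul_inv]
        linear_combination (-lam ^ 2) * mul_inv_cancel₀ hc
  · rintro ⟨μ, ⟨w, hw0, hMw⟩, hquad⟩
    refine ⟨Sum.elim (lam • w) w, ?_, ?_⟩
    · intro h
      apply hw0
      funext i
      exact congrFun h (Sum.inr i)
    · rw [Tblock, Matrix.fromBlocks_mulVec]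
      funext x
      cases x with
      | inl i =>
        have := congrFun hMw i
        simp only [Sum.elim_comp_inl, Sum.elim_comp_inr, Matrix.mulVec_smul,
          Matrix.smul_mulVec, hMw, Sum.elim_inl, Pi.add_apply, Pi.smul_apply, smul_eq_mul]
        linear_combination (-(w i)) * hquad
      | inr i =>
        simp [Matrix.one_mulVec, Matrix.zero_mulVec]
end

section
/- Let M be an n×n complex matrix and β ∈ ℂ. A complex number λ is an eigenvalue of the 2n×2n block matrix T_N(M,β) = [[(1+β)M, −βIₙ],[Iₙ, 0]] if and only if there exists an eigenvalue μ of M such that λ² − (1+β)μλ + β = 0. -/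
/-- The block matrix `T_N(M,β) = [[(1+β)M, −βI],[I, 0]]` (Jacobian of sNGMRES-R(1)). -/
noncomputable def TNblock {n : ℕ} (M : Matrix (Fin n) (Fin n) ℂ) (β : ℂ) :
    Matrix (Fin n ⊕ Fin n) (Fin n ⊕ Fin n) ℂ :=
  Matrix.fromBlocks ((1 + β) • M) ((-β) • (1 : Matrix (Fin n) (Fin n) ℂ))
    (1 : Matrix (Fin n) (Fin n) ℂ) 0

/-- Every square complex matrix of positive size has an eigenvalue. -/
lemma exists_eigenvalue_aux {n : ℕ} (hn : 0 < n) (M : Matrix (Fin n) (Fin n) ℂ) :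
    ∃ μ : ℂ, IsEigenvalue M μ := by
  haveI : NeZero n := ⟨hn.ne'⟩
  haveI : Nontrivial (Fin n → ℂ) := by
    exact Function.nontrivial
  obtain ⟨μ, hμ⟩ := Module.End.exists_eigenvalue (Matrix.toLin' M)
  obtain ⟨v, hv⟩ := hμ.exists_hasEigenvector
  refine ⟨μ, v, hv.2, ?_⟩
  have := hv.apply_eq_smul
  simpa [Matrix.toLin'_apply] using this

theorem stmt8 (n : ℕ) (M : Matrix (Fin n) (Fin n) ℂ) (β lam : ℂ) :
    IsEigenvalue (TNblock M β) lam ↔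
      ∃ μ : ℂ, IsEigenvalue M μ ∧ lam ^ 2 - (1 + β) * μ * lam + β = 0 := by
  constructor
  · rintro ⟨v, hv0, hv⟩
    set u : Fin n → ℂ := fun i => v (Sum.inl i) with hu
    set w : Fin n → ℂ := fun i => v (Sum.inr i) with hw
    have hvelim : v = Sum.elim u w := by
      funext i; cases i <;> rfl
    rw [hvelim] at hv
    rw [TNblock, Matrix.fromBlocks_mulVec] at hv
    have h1 : ((1 + β) • M).mulVec u + ((-β) • (1 : Matrix (Fin n) (Fin n) ℂ)).mulVec w
        = lam • u := by
      funext i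
      have := congrFun hv (Sum.inl i)
      simpa using this
    have h2 : u = lam • w := by
      funext i
      have := congrFun hv (Sum.inr i)
      simpa [Matrix.one_mulVec, Matrix.zero_mulVec] using this
    have h1' : (1 + β) • M.mulVec u + (-β) • w = lam • u := by
      rw [← h1, Matrix.smul_mulVec, Matrix.smul_mulVec, Matrix.one_mulVec]
    have hwne : w ≠ 0 := by
      intro hwz
      apply hv0
      rw [hvelim, hwz]
      have : u = 0 := by rw [h2, hwz, smul_zero]
      rw [this]
      funext i; cases i <;> rfl
    -- key equation : ((1+β)*lam) • M.mulVec w = (lam^2 + β) • w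
    have hkey : ((1 + β) * lam) • M.mulVec w = (lam ^ 2 + β) • w := by
      have := h1'
      rw [h2] at this
      have h3 : (1 + β) • M.mulVec (lam • w) = ((1 + β) * lam) • M.mulVec w := by
        rw [Matrix.mulVec_smul]
        rw [smul_smul]
      rw [h3] at this
      have : ((1 + β) * lam) • M.mulVec w = lam • lam • w - (-β) • w := by
        rw [← this]; ring_nf
      rw [this]
      funext i
      simp [Pi.smul_apply, Pi.sub_apply]
      ring
    by_cases hc : (1 + β) * lam = 0
    · rw [hc, zero_smul] at hkey
      have hlb : lam ^ 2 + β = 0 := by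
        rcases smul_eq_zero.mp hkey.symm with h | h
        · exact h
        · exact absurd h hwne
      obtain ⟨i, hi⟩ := Function.ne_iff.mp hwne
      have hn : 0 < n := i.pos
      obtain ⟨μ, hμ⟩ := exists_eigenvalue_aux hn M
      refine ⟨μ, hμ, ?_⟩
      have : (1 + β) * μ * lam = (1 + β) * lam * μ := by ring
      rw [this, hc]
      linear_combination hlb
    · set μ := (lam ^ 2 + β) / ((1 + β) * lam) with hμdef
      refine ⟨μ, ⟨w, hwne, ?_⟩, ?_⟩
      · have : M.mulVec w = (((1 + β) * lam)⁻¹ * (lam ^ 2 + β)) • w := by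
          have h4 := congrArg (fun x => ((1 + β) * lam)⁻¹ • x) hkey
          simp only [smul_smul] at h4
          rwa [inv_mul_cancel₀ hc, one_smul] at h4
        rw [this, hμdef]
        congr 1
        field_simp
      · rw [hμdef]
        have hb : (1 + β) ≠ 0 := left_ne_zero_of_mul hc
        have hl : lam ≠ 0 := right_ne_zero_of_mul hc
        field_simp
        ring
  · rintro ⟨μ, ⟨v, hv0, hv⟩, hquad⟩
    refine ⟨Sum.elim (lam • v) v, ?_, ?_⟩
    · intro h
      apply hv0
      funext i
      exact congrFun h (Sum.inr i)
    · rw [TNblock, Matrix.fromBlocks_mulVec]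
      have hlam2 : (1 + β) * μ * lam = lam ^ 2 + β := by linear_combination -hquad
      simp only [Sum.elim_comp_inl, Sum.elim_comp_inr]
      funext i
      cases i with
      | inl i =>
        simp only [Sum.elim_inl, Pi.add_apply, Pi.smul_apply]
        have : ((1 + β) • M).mulVec (lam • v) = ((1 + β) * lam * μ) • v := by
          rw [Matrix.smul_mulVec, Matrix.mulVec_smul, hv, smul_smul, smul_smul]
        rw [this]
        have h2 : ((-β) • (1 : Matrix (Fin n) (Fin n) ℂ)).mulVec v = (-β) • v := by
          rw [Matrix.smul_mulVec, Matrix.one_mulVec]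
        rw [h2]
        simp only [Pi.smul_apply, smul_eq_mul]
        have : (1 + β) * lam * μ = lam ^ 2 + β := by linear_combination -hquad
        rw [this]; ring
      | inr i =>
        simp [Matrix.one_mulVec, Matrix.zero_mulVec]
end

section
/- Let H be an n×n real symmetric positive definite matrix with smallest eigenvalue ℓ and largest eigenvalue L, 0 < ℓ < L. For each step length α ∈ (0, 1/L], set ρ_q(α) := 1 − αℓ (the spectral radius of I − αH). Then: (i) for all β ∈ ℝ, ρ(T(I−αH, β)) ≥ 1 − √(1−ρ_q(α)); (ii) ρ(T(I−αH, β)) = 1 − √(1−ρ_q(α)) when β = (1−√(1−ρ_q(α)))/(1+√(1−ρ_q(α))), and this is the only β achieving equality. Moreover, the map α ↦ 1 − √(1−ρ_q(α)) = 1 − √(αℓ) over α ∈ (0, 1/L] attains its minimum only at α = 1/L, where its value is 1 − √(ℓ/L). -/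
/-- `lam : ℂ` is an eigenvalue (over `ℂ`) of the square real matrix `A`. -/
def IsCEigenvalue {n : Type*} [Fintype n] (A : Matrix n n ℝ) (lam : ℂ) : Prop :=
  ∃ v : n → ℂ, v ≠ 0 ∧ (A.map (Complex.ofReal)).mulVec v = lam • v

/-- The spectral radius of a square real matrix: the maximum modulus of its
eigenvalues over `ℂ`. -/
noncomputable def specRad {n : Type*} [Fintype n] (A : Matrix n n ℝ) : ℝ :=
  sSup {r : ℝ | ∃ lam : ℂ, IsCEigenvalue A lam ∧ r = ‖lam‖}

/-- The block matrix `T(M,β) = [[(1+β)M, −βM],[I, 0]]` (Jacobian of sAA(1)). -/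
noncomputable def TAA {n : ℕ} (M : Matrix (Fin n) (Fin n) ℝ) (β : ℝ) :
    Matrix (Fin n ⊕ Fin n) (Fin n ⊕ Fin n) ℝ :=
  Matrix.fromBlocks ((1 + β) • M) ((-β) • M) (1 : Matrix (Fin n) (Fin n) ℝ) 0


lemma eig_bound {m : Type*} [Fintype m] (A : Matrix m m ℝ) (lam : ℂ)
    (h : IsCEigenvalue A lam) : ‖lam‖ ≤ ∑ i, ∑ j, |A i j| := by
  obtain ⟨v, hv, hev⟩ := h
  have hne : (Finset.univ : Finset m).Nonempty := by
    by_contra hc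
    apply hv
    funext i
    exact absurd (Finset.mem_univ i) (fun h => hc ⟨i, h⟩)
  obtain ⟨i, -, hi⟩ := Finset.exists_max_image Finset.univ (fun i => ‖v i‖) hne
  have hvi : 0 < ‖v i‖ := by
    rcases Function.ne_iff.mp hv with ⟨j, hj⟩
    have := hi j (Finset.mem_univ j)
    have : 0 < ‖v j‖ := by simpa using hj
    linarith [hi j (Finset.mem_univ j)]
  have hrow : (A.map (Complex.ofReal)).mulVec v i = lam * v i := by
    rw [hev]; rfl
  have hAbs : ‖lam * v i‖ ≤ (∑ j, |A i j|) * ‖v i‖ := by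
    rw [← hrow]
    unfold Matrix.mulVec dotProduct
    calc ‖∑ j, (A.map Complex.ofReal) i j * v j‖
        ≤ ∑ j, ‖(A.map Complex.ofReal) i j * v j‖ := by
          exact norm_sum_le _ _
      _ ≤ ∑ j, |A i j| * ‖v i‖ := by
          apply Finset.sum_le_sum
          intro j _
          rw [norm_mul]
          simp only [Matrix.map_apply, Complex.norm_real, Real.norm_eq_abs]
          exact mul_le_mul_of_nonneg_left (hi j (Finset.mem_univ j)) (abs_nonneg _)
      _ = (∑ j, |A i j|) * ‖v i‖ := by rw [Finset.sum_mul]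
  rw [norm_mul] at hAbs
  have h1 : ‖lam‖ ≤ ∑ j, |A i j| := le_of_mul_le_mul_right (by linarith) hvi
  refine h1.trans ?_
  have : ∀ k, (0:ℝ) ≤ ∑ j, |A k j| := fun k => Finset.sum_nonneg fun j _ => abs_nonneg _
  exact Finset.single_le_sum (fun k _ => this k) (Finset.mem_univ i)

lemma specRad_bddAbove {m : Type*} [Fintype m] (A : Matrix m m ℝ) :
    BddAbove {r : ℝ | ∃ lam : ℂ, IsCEigenvalue A lam ∧ r = ‖lam‖} := by
  refine ⟨∑ i, ∑ j, |A i j|, fun r hr => ?_⟩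
  obtain ⟨lam, hlam, rfl⟩ := hr
  exact eig_bound A lam hlam

lemma le_specRad {m : Type*} [Fintype m] {A : Matrix m m ℝ} {lam : ℂ}
    (h : IsCEigenvalue A lam) : ‖lam‖ ≤ specRad A :=
  le_csSup (specRad_bddAbove A) ⟨lam, h, rfl⟩

lemma specRad_le {m : Type*} [Fintype m] {A : Matrix m m ℝ} {c : ℝ} (hc : 0 ≤ c)
    (h : ∀ lam : ℂ, IsCEigenvalue A lam → ‖lam‖ ≤ c) : specRad A ≤ c := by
  apply Real.sSup_le _ hc
  rintro r ⟨lam, hlam, rfl⟩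
  exact h lam hlam


lemma mulVec_map_ofReal {m : Type*} [Fintype m] (A : Matrix m m ℝ) (v : m → ℝ) :
    (A.map Complex.ofReal).mulVec (fun i => (v i : ℂ)) = fun i => ((A.mulVec v i : ℝ) : ℂ) := by
  funext i
  unfold Matrix.mulVec dotProduct
  push_cast
  rfl

lemma TAA_eig_of {n : ℕ} {M : Matrix (Fin n) (Fin n) ℝ} {β μ : ℝ} {v : Fin n → ℝ}
    (hv : v ≠ 0) (hMv : M.mulVec v = μ • v) (lam : ℂ)
    (hlam : lam ^ 2 - (1 + β) * μ * lam + β * μ = 0) :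
    IsCEigenvalue (TAA M β) lam := by
  set vc : Fin n → ℂ := fun i => (v i : ℂ) with hvc
  have hvcne : vc ≠ 0 := by
    intro h
    apply hv
    funext i
    have := congrFun h i
    simpa [hvc] using this
  have hMcv : (M.map Complex.ofReal).mulVec vc = (μ : ℂ) • vc := by
    rw [hvc, mulVec_map_ofReal, hMv]
    funext i
    simp
  refine ⟨Sum.elim (lam • vc) vc, ?_, ?_⟩
  · intro h
    apply hvcne
    funext i
    have := congrFun h (Sum.inr i)
    simpa using this
  · have hmap : (TAA M β).map Complex.ofReal =
        Matrix.fromBlocks (((1:ℂ) + β) • M.map Complex.ofReal) ((-(β:ℂ)) • M.map Complex.ofReal)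
          (1 : Matrix (Fin n) (Fin n) ℂ) 0 := by
      unfold TAA
      rw [Matrix.fromBlocks_map]
      funext i j
      cases i <;> cases j <;>
        simp [Matrix.fromBlocks, Matrix.map_apply, Matrix.one_apply] <;>
        · split_ifs <;> push_cast <;> ring
    rw [hmap, Matrix.fromBlocks_mulVec]
    have h1 : (Sum.elim (lam • vc) vc : Fin n ⊕ Fin n → ℂ) ∘ Sum.inl = lam • vc := rfl
    have h2 : (Sum.elim (lam • vc) vc : Fin n ⊕ Fin n → ℂ) ∘ Sum.inr = vc := rfl
    rw [h1, h2]
    have key : (((1:ℂ) + β) • M.map Complex.ofReal).mulVec (lam • vc)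
        + ((-(β:ℂ)) • M.map Complex.ofReal).mulVec vc = lam • (lam • vc) := by
      rw [Matrix.smul_mulVec, Matrix.smul_mulVec, Matrix.mulVec_smul, hMcv]
      funext i
      simp only [Pi.smul_apply, Pi.add_apply, smul_eq_mul]
      linear_combination (-vc i) * hlam
    rw [key, Matrix.one_mulVec]
    funext k
    cases k <;> simp


lemma symm_real_eig {m : Type*} [Fintype m] {M : Matrix m m ℝ} (hM : M.IsSymm)
    {lam : ℂ} (h : IsCEigenvalue M lam) :
    ∃ μ : ℝ, lam = μ ∧ ∃ w : m → ℝ, w ≠ 0 ∧ M.mulVec w = μ • w := by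
  obtain ⟨v, hv, hev⟩ := h
  set p : m → ℝ := fun i => (v i).re with hp
  set q : m → ℝ := fun i => (v i).im with hq
  have hre : ∀ i, M.mulVec p i = lam.re * p i - lam.im * q i := by
    intro i
    have h0 := congrFun hev i
    have hre := congrArg Complex.re h0
    simp only [Matrix.mulVec, dotProduct, Pi.smul_apply, smul_eq_mul,
      Complex.mul_re] at hre ⊢
    rw [Complex.re_sum] at hre
    simp only [Complex.mul_re, Matrix.map_apply, Complex.ofReal_re, Complex.ofReal_im,
      zero_mul, sub_zero] at hre
    simpa [hp, hq] using hre
  have him : ∀ i, M.mulVec q i = lam.im * p i + lam.re * q i := by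
    intro i
    have h0 := congrFun hev i
    have him := congrArg Complex.im h0
    simp only [Matrix.mulVec, dotProduct, Pi.smul_apply, smul_eq_mul,
      Complex.mul_im] at him ⊢
    rw [Complex.im_sum] at him
    simp only [Complex.mul_im, Matrix.map_apply, Complex.ofReal_re, Complex.ofReal_im,
      zero_mul, add_zero] at him
    rw [add_comm]
    simpa [hp, hq] using him
  have hsym : dotProduct p (M.mulVec q) = dotProduct q (M.mulVec p) := by
    rw [Matrix.dotProduct_mulVec, ← Matrix.mulVec_transpose, hM.eq, dotProduct_comm]
  obtain ⟨j, hj⟩ := Function.ne_iff.mp hv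
  have hj' : p j ≠ 0 ∨ q j ≠ 0 := by
    by_contra hc
    push_neg at hc
    exact hj (Complex.ext (by simpa [hp] using hc.1) (by simpa [hq] using hc.2))
  have hpq : 0 < dotProduct p p + dotProduct q q := by
    have h1 : dotProduct p p + dotProduct q q = ∑ i, (p i ^ 2 + q i ^ 2) := by
      unfold dotProduct
      rw [← Finset.sum_add_distrib]
      exact Finset.sum_congr rfl fun i _ => by ring
    rw [h1]
    refine Finset.sum_pos' (fun i _ => by positivity) ⟨j, Finset.mem_univ j, ?_⟩
    rcases hj' with h | h
    · have := pow_pos (abs_pos.mpr h) 2 |>.trans_le (le_of_eq (sq_abs _)); nlinarith [sq_nonneg (q j)]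
    · have := pow_pos (abs_pos.mpr h) 2 |>.trans_le (le_of_eq (sq_abs _)); nlinarith [sq_nonneg (p j)]
  have e1 : dotProduct p (M.mulVec q)
      = lam.im * dotProduct p p + lam.re * dotProduct p q := by
    unfold dotProduct
    simp only [him, Finset.mul_sum]
    rw [← Finset.sum_add_distrib]
    exact Finset.sum_congr rfl fun i _ => by ring
  have e2 : dotProduct q (M.mulVec p)
      = lam.re * dotProduct p q - lam.im * dotProduct q q := by
    unfold dotProduct
    simp only [hre, Finset.mul_sum]
    rw [← Finset.sum_sub_distrib]
    exact Finset.sum_congr rfl fun i _ => by ring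
  have him0 : lam.im = 0 := by
    rw [e1, e2] at hsym
    have : lam.im * (dotProduct p p + dotProduct q q) = 0 := by linarith
    exact (mul_eq_zero.mp this).resolve_right (ne_of_gt hpq)
  refine ⟨lam.re, Complex.ext rfl (by simp [him0]), ?_⟩
  rcases hj' with h | h
  · refine ⟨p, fun hc => h (by rw [hc]; rfl), ?_⟩
    funext i
    rw [hre i, him0]
    simp
  · refine ⟨q, fun hc => h (by rw [hc]; rfl), ?_⟩
    funext i
    rw [him i, him0]
    simp


-- modulus of a root of a real quadratic with nonpositive discriminant
lemma quad_root_abs {s p : ℝ} {lam : ℂ} (heq : lam ^ 2 - (s : ℂ) * lam + (p : ℂ) = 0)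
    (hdisc : s ^ 2 ≤ 4 * p) : ‖lam‖ ^ 2 = p := by
  set x := lam.re with hx
  set y := lam.im with hy
  have hre : x ^ 2 - y ^ 2 - s * x + p = 0 := by
    have := congrArg Complex.re heq
    simp [pow_two, Complex.mul_re, Complex.mul_im, hx, hy] at this
    linarith [this]
  have him : 2 * x * y - s * y = 0 := by
    have := congrArg Complex.im heq
    simp [pow_two, Complex.mul_re, Complex.mul_im, hx, hy] at this
    linarith [this]
  have habs : ‖lam‖ ^ 2 = x ^ 2 + y ^ 2 := by
    rw [Complex.sq_norm, Complex.normSq_apply]; ring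
  rw [habs]
  rcases eq_or_ne y 0 with h | h
  · rw [h] at hre ⊢
    nlinarith [sq_nonneg (2 * x - s)]
  · have h2x : 2 * x = s := by
      have := mul_eq_zero.mp (show y * (2 * x - s) = 0 by linarith [him])
      rcases this with h' | h'
      · exact absurd h' h
      · linarith
    have hsx : s * x = 2 * x ^ 2 := by rw [← h2x]; ring
    linarith


lemma TAA_map {n : ℕ} (M : Matrix (Fin n) (Fin n) ℝ) (β : ℝ) :
    (TAA M β).map Complex.ofReal =
      Matrix.fromBlocks (((1:ℂ) + β) • M.map Complex.ofReal) ((-(β:ℂ)) • M.map Complex.ofReal)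
        (1 : Matrix (Fin n) (Fin n) ℂ) 0 := by
  unfold TAA
  rw [Matrix.fromBlocks_map]
  funext i j
  cases i <;> cases j <;>
    simp [Matrix.fromBlocks, Matrix.map_apply, Matrix.one_apply] <;>
    · split_ifs <;> push_cast <;> ring

lemma TAA_eig_rev {n : ℕ} {M : Matrix (Fin n) (Fin n) ℝ} (hM : M.IsSymm) {β : ℝ} {lam : ℂ}
    (h : IsCEigenvalue (TAA M β) lam) :
    lam = 0 ∨ ∃ μ : ℝ, (∃ w : Fin n → ℝ, w ≠ 0 ∧ M.mulVec w = μ • w) ∧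
      lam ^ 2 - (1 + (β:ℂ)) * (μ:ℂ) * lam + (β:ℂ) * (μ:ℂ) = 0 := by
  obtain ⟨u, hu, hev⟩ := h
  rw [TAA_map, Matrix.fromBlocks_mulVec] at hev
  set Mc := M.map Complex.ofReal with hMc
  set a : Fin n → ℂ := u ∘ Sum.inl with ha
  set b : Fin n → ℂ := u ∘ Sum.inr with hb
  have h2 : ∀ i, a i = lam * b i := by
    intro i
    have := congrFun hev (Sum.inr i)
    simpa [Matrix.one_mulVec, hb] using this
  have h1 : ∀ i, (1 + (β:ℂ)) * (Mc.mulVec a i) + (-(β:ℂ)) * (Mc.mulVec b i) = lam * a i := by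
    intro i
    have := congrFun hev (Sum.inl i)
    rw [Matrix.smul_mulVec, Matrix.smul_mulVec] at this
    simpa [ha, hb] using this
  have hbne : b ≠ 0 := by
    intro hc
    apply hu
    funext k
    cases k with
    | inl i =>
      have := h2 i
      rw [show b i = 0 from congrFun hc i] at this
      simpa [ha] using this.trans (by ring)
    | inr i => simpa [hb] using congrFun hc i
  have hMa : Mc.mulVec a = lam • Mc.mulVec b := by
    rw [show a = lam • b from funext h2, Matrix.mulVec_smul]
  have key : ∀ i, ((1 + (β:ℂ)) * lam - β) * Mc.mulVec b i = lam ^ 2 * b i := by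
    intro i
    have e1 := h1 i
    have e2 := h2 i
    have e3 := congrFun hMa i
    simp only [Pi.smul_apply, smul_eq_mul] at e3
    rw [e3, e2] at e1
    linear_combination e1
  rcases eq_or_ne ((1 + (β:ℂ)) * lam - β) 0 with h0 | h0
  · left
    obtain ⟨j, hj⟩ := Function.ne_iff.mp hbne
    have hk := key j
    rw [h0, zero_mul] at hk
    have : lam ^ 2 = 0 := by
      rcases mul_eq_zero.mp hk.symm with h' | h'
      · exact h'
      · exact absurd h' hj
    exact pow_eq_zero_iff (by norm_num) |>.mp this
  · right
    have hMb : Mc.mulVec b = (lam ^ 2 / ((1 + (β:ℂ)) * lam - β)) • b := by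
      funext i
      have hk := key i
      simp only [Pi.smul_apply, smul_eq_mul]
      rw [div_mul_eq_mul_div, eq_div_iff h0]
      linear_combination hk
    obtain ⟨μ, hμ, w, hw, hMw⟩ := symm_real_eig hM ⟨b, hbne, hMb⟩
    refine ⟨μ, ⟨w, hw, hMw⟩, ?_⟩
    have hq : lam ^ 2 = (μ:ℂ) * ((1 + (β:ℂ)) * lam - β) := by
      rw [← hμ]
      rw [div_mul_cancel₀ _ h0]
    linear_combination hq

set_option maxHeartbeats 1000000 in
theorem stmt9 (n : ℕ) (H : Matrix (Fin n) (Fin n) ℝ) (hsymm : H.IsSymm) (hpd : H.PosDef)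
    (ℓ L : ℝ) (hℓ : 0 < ℓ) (hℓL : ℓ < L)
    (hℓeig : ∃ v : Fin n → ℝ, v ≠ 0 ∧ H.mulVec v = ℓ • v)
    (hLeig : ∃ v : Fin n → ℝ, v ≠ 0 ∧ H.mulVec v = L • v)
    (hext : ∀ μ : ℝ, (∃ v : Fin n → ℝ, v ≠ 0 ∧ H.mulVec v = μ • v) → ℓ ≤ μ ∧ μ ≤ L)
    (α : ℝ) (hα0 : 0 < α) (hα1 : α ≤ 1 / L)
    (ρq : ℝ) (hρq : ρq = 1 - α * ℓ) :
    (∀ β : ℝ,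
      1 - Real.sqrt (1 - ρq) ≤ specRad (TAA ((1 : Matrix (Fin n) (Fin n) ℝ) - α • H) β)) ∧
    specRad (TAA ((1 : Matrix (Fin n) (Fin n) ℝ) - α • H)
        ((1 - Real.sqrt (1 - ρq)) / (1 + Real.sqrt (1 - ρq)))) = 1 - Real.sqrt (1 - ρq) ∧
    (∀ β : ℝ,
      specRad (TAA ((1 : Matrix (Fin n) (Fin n) ℝ) - α • H) β) = 1 - Real.sqrt (1 - ρq) →
        β = (1 - Real.sqrt (1 - ρq)) / (1 + Real.sqrt (1 - ρq))) ∧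
    (∀ α' : ℝ, 0 < α' → α' ≤ 1 / L →
      1 - Real.sqrt (ℓ / L) ≤ 1 - Real.sqrt (1 - (1 - α' * ℓ)) ∧
      (1 - Real.sqrt (1 - (1 - α' * ℓ)) = 1 - Real.sqrt (ℓ / L) → α' = 1 / L)) := by
  have hL : 0 < L := lt_trans hℓ hℓL
  have hαL : α * L ≤ 1 := by
    have := (le_div_iff₀ hL).mp hα1
    linarith
  have hαℓ0 : 0 < α * ℓ := mul_pos hα0 hℓ
  have hαℓ1 : α * ℓ < 1 := by nlinarith
  have h1ρ : 1 - ρq = α * ℓ := by rw [hρq]; ring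
  set M : Matrix (Fin n) (Fin n) ℝ := (1 : Matrix (Fin n) (Fin n) ℝ) - α • H with hM
  set r := Real.sqrt (1 - ρq) with hr
  have hr2 : r ^ 2 = α * ℓ := by rw [hr, Real.sq_sqrt (by linarith), h1ρ]
  have hr0 : 0 < r := by rw [hr]; apply Real.sqrt_pos.mpr; linarith
  have hr1 : r < 1 := by nlinarith
  have hρq' : ρq = 1 - r ^ 2 := by rw [hr2]; linarith
  have hρqpos : 0 < ρq := by nlinarith
  set βs := (1 - r) / (1 + r) with hβs
  have hrne : (1:ℝ) + r ≠ 0 := by positivity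
  have hβseq : βs * (1 + r) = 1 - r := by rw [hβs]; field_simp
  have hβs0 : 0 < βs := by rw [hβs]; exact div_pos (by linarith) (by linarith)
  have hMsymm : M.IsSymm := by
    unfold Matrix.IsSymm
    rw [hM, Matrix.transpose_sub, Matrix.transpose_smul, Matrix.transpose_one, hsymm]
  obtain ⟨vℓ, hvℓ, hvℓe⟩ := hℓeig
  have hMρq : M.mulVec vℓ = ρq • vℓ := by
    rw [hM, Matrix.sub_mulVec, Matrix.one_mulVec, Matrix.smul_mulVec, hvℓe, hρq]
    funext i
    simp
    ring
  have hμrange : ∀ μ : ℝ, (∃ w : Fin n → ℝ, w ≠ 0 ∧ M.mulVec w = μ • w) → 0 ≤ μ ∧ μ ≤ ρq := by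
    rintro μ ⟨w, hw, hMw⟩
    have hHw : H.mulVec w = ((1 - μ)/α) • w := by
      rw [hM, Matrix.sub_mulVec, Matrix.one_mulVec, Matrix.smul_mulVec] at hMw
      funext i
      have := congrFun hMw i
      simp only [Pi.sub_apply, Pi.smul_apply, smul_eq_mul] at this ⊢
      field_simp
      linarith
    obtain ⟨hl, hu⟩ := hext _ ⟨w, hw, hHw⟩
    rw [div_le_iff₀ hα0] at hu
    rw [le_div_iff₀ hα0] at hl
    constructor
    · nlinarith
    · nlinarith
  -- key lower-bound lemma
  have lb : ∀ β : ℝ, ∃ lam : ℂ, IsCEigenvalue (TAA M β) lam ∧ (1 - r ≤ ‖lam‖)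
      ∧ (β ≠ βs → 1 - r < ‖lam‖) := by
    intro β
    rcases le_or_gt β βs with hβ | hβ
    · set s := (1 + β) * ρq with hs
      set p := β * ρq with hp0
      have hgap : (2*(1-r) - s)^2 + 4*r*(1-r)*(1+r)*(βs - β) = s^2 - 4*p := by
        rw [hs, hp0, hρq']
        linear_combination (4*r*(1-r)) * hβseq
      have h2s : 0 ≤ 2*(1-r) - s := by
        rw [hs, hρq']
        nlinarith [mul_nonneg (sub_nonneg.mpr hβ) (show (0:ℝ) ≤ 1 - r^2 by nlinarith)]
      have hterm : 0 ≤ 4*r*(1-r)*(1+r)*(βs - β) := by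
        have h1 : (0:ℝ) ≤ βs - β := sub_nonneg.mpr hβ
        have : (0:ℝ) ≤ 4*r*(1-r)*(1+r) := by nlinarith
        exact mul_nonneg this h1
      have hΔ0 : (2*(1-r) - s)^2 ≤ s^2 - 4*p := by linarith
      have hΔnn : 0 ≤ s^2 - 4*p := le_trans (sq_nonneg _) hΔ0
      set d := Real.sqrt (s^2 - 4*p) with hd
      have hd2 : d^2 = s^2 - 4*p := Real.sq_sqrt hΔnn
      have hd0 : 0 ≤ d := Real.sqrt_nonneg _
      have hdge : 2*(1-r) - s ≤ d := by
        have h' := Real.sqrt_le_sqrt hΔ0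
        rwa [Real.sqrt_sq h2s] at h'
      have hroot : ((s + d)/2)^2 - s*((s + d)/2) + p = 0 := by
        linear_combination hd2 / 4
      have hge : 1 - r ≤ (s + d)/2 := by linarith
      have hrootC : (((s + d)/2 : ℝ) : ℂ)^2 - (1 + (β:ℂ)) * (ρq:ℂ) * (((s + d)/2 : ℝ) : ℂ)
          + (β:ℂ) * (ρq:ℂ) = 0 := by
        rw [hs, hp0] at hroot
        exact_mod_cast hroot
      refine ⟨(((s + d)/2 : ℝ) : ℂ), TAA_eig_of hvℓ hMρq _ hrootC, ?_, ?_⟩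
      · rw [Complex.norm_real, Real.norm_eq_abs]
        exact le_trans hge (le_abs_self _)
      · intro hne
        have hβlt : β < βs := lt_of_le_of_ne hβ hne
        have hterm' : 0 < 4*r*(1-r)*(1+r)*(βs - β) := by
          have h1 : (0:ℝ) < βs - β := sub_pos.mpr hβlt
          have : (0:ℝ) < 4*r*(1-r)*(1+r) := by nlinarith
          exact mul_pos this h1
        have hd2' : (2*(1-r)-s)^2 < d^2 := by rw [hd2]; nlinarith
        have hlt : 1 - r < (s + d)/2 := by
          have := lt_of_pow_lt_pow_left₀ 2 hd0 hd2'
          linarith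
        rw [Complex.norm_real, Real.norm_eq_abs]
        exact lt_of_lt_of_le hlt (le_abs_self _)
    · set s := (1 + β) * ρq with hs
      set p := β * ρq with hp0
      have hpgt : (1-r)^2 < p := by
        rw [hp0, hρq']
        nlinarith [mul_lt_mul_of_pos_right hβ hρqpos, hβseq]
      rcases le_or_gt (4*p) (s^2) with hD | hD
      · -- real roots, larger root > 1 - r
        have hΔnn : 0 ≤ s^2 - 4*p := by linarith
        set d := Real.sqrt (s^2 - 4*p) with hd
        have hd2 : d^2 = s^2 - 4*p := Real.sq_sqrt hΔnn
        have hd0 : 0 ≤ d := Real.sqrt_nonneg _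
        have hroot : ((s + d)/2)^2 - s*((s + d)/2) + p = 0 := by
          linear_combination hd2 / 4
        have hsgt : 2*(1-r) < s := by
          rw [hs, hρq']
          nlinarith [mul_lt_mul_of_pos_right hβ (show (0:ℝ) < 1 - r^2 by nlinarith), hβseq]
        have hlt : 1 - r < (s + d)/2 := by linarith
        have hrootC : (((s + d)/2 : ℝ) : ℂ)^2 - (1 + (β:ℂ)) * (ρq:ℂ) * (((s + d)/2 : ℝ) : ℂ)
            + (β:ℂ) * (ρq:ℂ) = 0 := by
          rw [hs, hp0] at hroot
          exact_mod_cast hroot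
        refine ⟨(((s + d)/2 : ℝ) : ℂ), TAA_eig_of hvℓ hMρq _ hrootC, ?_, fun _ => ?_⟩
        · rw [Complex.norm_real, Real.norm_eq_abs]
          exact le_trans (le_of_lt hlt) (le_abs_self _)
        · rw [Complex.norm_real, Real.norm_eq_abs]
          exact lt_of_lt_of_le hlt (le_abs_self _)
      · -- complex conjugate roots
        set y := Real.sqrt (p - s^2/4) with hy
        have hy2 : y^2 = p - s^2/4 := Real.sq_sqrt (by linarith)
        set lam : ℂ := (s/2 : ℝ) + (y:ℝ) * Complex.I with hlamdef
        have hy2C : (y:ℂ)^2 = (p:ℂ) - (s:ℂ)^2/4 := by exact_mod_cast hy2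
        have hrootC : lam^2 - (1 + (β:ℂ)) * (ρq:ℂ) * lam + (β:ℂ) * (ρq:ℂ) = 0 := by
          have hsC : ((s:ℝ):ℂ) = (1 + (β:ℂ)) * (ρq:ℂ) := by rw [hs]; push_cast; ring
          have hpC : ((p:ℝ):ℂ) = (β:ℂ) * (ρq:ℂ) := by rw [hp0]; push_cast; ring
          rw [hlamdef, ← hsC, ← hpC]
          push_cast
          linear_combination (Complex.I^2) * hy2C + (((p:ℝ):ℂ) - ((s:ℝ):ℂ)^2/4) * Complex.I_sq
        have habs2 : ‖lam‖ ^ 2 = p := by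
          rw [Complex.sq_norm, hlamdef]
          rw [Complex.normSq_apply]
          simp [Complex.add_re, Complex.add_im, Complex.mul_re, Complex.mul_im]
          nlinarith [hy2]
        have habs : 1 - r < ‖lam‖ := by
          nlinarith [norm_nonneg lam, habs2, hpgt, hr1]
        exact ⟨lam, TAA_eig_of hvℓ hMρq _ hrootC, le_of_lt habs, fun _ => habs⟩
  refine ⟨?_, ?_, ?_, ?_⟩
  · intro β
    obtain ⟨lam, he, h1, -⟩ := lb β
    exact le_trans h1 (le_specRad he)
  · -- equality at βs
    apply le_antisymm
    · apply specRad_le (by linarith)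
      intro lam hlam
      rcases TAA_eig_rev hMsymm hlam with h0 | ⟨μ, hμeig, hquad⟩
      · rw [h0]
        simp
        linarith
      · obtain ⟨hμ0, hμρ⟩ := hμrange μ hμeig
        have h1βs : (1 + βs) * (1 + r) = 2 := by linear_combination hβseq
        have h4βs : (1 + βs)^2 * ρq = 4 * βs := by
          rw [hρq', hβs]
          field_simp
          ring
        have hd : ((1 + βs) * μ)^2 ≤ 4 * (βs * μ) := by
          nlinarith [h4βs, hμ0, hμρ, sq_nonneg (1+βs),
            mul_le_mul_of_nonneg_left hμρ (mul_nonneg (sq_nonneg (1+βs)) hμ0)]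
        have heqC : lam^2 - (((1 + βs) * μ : ℝ) : ℂ) * lam + ((βs * μ : ℝ) : ℂ) = 0 := by
          push_cast
          linear_combination hquad
        have habs2 := quad_root_abs heqC hd
        have hβρ : βs * ρq = (1 - r)^2 := by
          rw [hρq']
          linear_combination (1 - r) * hβseq
        nlinarith [habs2, hμρ, hβρ, norm_nonneg lam, hβs0, hr1]
    · obtain ⟨lam, he, h1, -⟩ := lb βs
      exact le_trans h1 (le_specRad he)
  · intro β hβeq
    by_contra hne
    obtain ⟨lam, he, -, hstrict⟩ := lb β
    have h2 := le_specRad he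
    rw [hβeq] at h2
    exact absurd h2 (not_le.mpr (hstrict hne))
  · intro α' h0 h1
    have he : 1 - (1 - α' * ℓ) = α' * ℓ := by ring
    have hle : α' * ℓ ≤ ℓ / L := by
      rw [le_div_iff₀ hL]
      have := (le_div_iff₀ hL).mp h1
      nlinarith
    constructor
    · rw [he]
      have := Real.sqrt_le_sqrt hle
      linarith
    · rw [he]
      intro heq
      have h2 : Real.sqrt (α' * ℓ) = Real.sqrt (ℓ / L) := by linarith
      have h3 : α' * ℓ = ℓ / L := by
        have h4 := congrArg (fun t : ℝ => t ^ 2) h2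
        simpa [Real.sq_sqrt (le_of_lt (mul_pos h0 hℓ)),
          Real.sq_sqrt (le_of_lt (div_pos hℓ hL))] using h4
      rw [eq_div_iff (ne_of_gt hL)] at h3
      rw [eq_div_iff (ne_of_gt hL)]
      have h5 : ℓ * (α' * L) = ℓ * 1 := by linear_combination h3
      have := mul_left_cancel₀ (ne_of_gt hℓ) h5
      linarith
end

section
/- Let H be an n×n real symmetric positive definite matrix with smallest eigenvalue ℓ and largest eigenvalue L, 0 < ℓ < L, and write κ = L/ℓ. Then the infimum over α > 0 and β ∈ ℝ of the spectral radius ρ(T_N(I−αH, β)) equals (√κ − 1)/(√κ + 1), it is attained at α* = 2/(L+ℓ) and β* = ((√κ − 1)/(√κ + 1))², and these are the unique optimal parameters: if ρ(T_N(I−αH, β)) = (√κ−1)/(√κ+1) with α > 0, then α = α* and β = β*. Moreover (√κ−1)/(√κ+1) < 1 − √(4ℓ/(3L+ℓ)). -/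
/-- The block matrix `T_N(M,β) = [[(1+β)M, −βI],[I, 0]]` (Jacobian of sNGMRES-R(1)). -/
noncomputable def TN {n : ℕ} (M : Matrix (Fin n) (Fin n) ℝ) (β : ℝ) :
    Matrix (Fin n ⊕ Fin n) (Fin n ⊕ Fin n) ℝ :=
  Matrix.fromBlocks ((1 + β) • M) ((-β) • (1 : Matrix (Fin n) (Fin n) ℝ))
    (1 : Matrix (Fin n) (Fin n) ℝ) 0



/-- Factorization of a real monic quadratic over ℂ. -/
lemma quad_factor (c b : ℝ) : ∃ r₁ r₂ : ℂ,
    (∀ lam : ℂ, lam ^ 2 - (c : ℂ) * lam + (b : ℝ) = 0 ↔ (lam = r₁ ∨ lam = r₂)) ∧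
    r₁ * r₂ = (b : ℂ) ∧
    (0 ≤ c ^ 2 - 4 * b →
      r₁ = ((c + Real.sqrt (c ^ 2 - 4 * b)) / 2 : ℝ) ∧
      r₂ = ((c - Real.sqrt (c ^ 2 - 4 * b)) / 2 : ℝ)) ∧
    (c ^ 2 - 4 * b < 0 → ‖r₁‖ ^ 2 = b ∧ ‖r₂‖ ^ 2 = b) := by
  by_cases hDpos : 0 ≤ c ^ 2 - 4 * b
  · have hsq : ((Real.sqrt (c ^ 2 - 4 * b) : ℝ) : ℂ) ^ 2 = (c : ℂ) ^ 2 - 4 * (b : ℂ) := by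
      rw [← Complex.ofReal_pow, Real.sq_sqrt hDpos]; push_cast; ring
    refine ⟨((c + Real.sqrt (c ^ 2 - 4 * b)) / 2 : ℝ), ((c - Real.sqrt (c ^ 2 - 4 * b)) / 2 : ℝ),
      ?_, ?_, fun _ => ⟨rfl, rfl⟩, fun h => absurd hDpos (not_le.2 h)⟩
    · intro lam
      constructor
      · intro h
        have hfac : (lam - ((c + Real.sqrt (c ^ 2 - 4 * b)) / 2 : ℝ)) *
            (lam - ((c - Real.sqrt (c ^ 2 - 4 * b)) / 2 : ℝ)) = 0 := by
          push_cast
          push_cast at hsq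
          linear_combination h - (1/4 : ℂ) * hsq
        rcases mul_eq_zero.1 hfac with h' | h'
        · exact Or.inl (by linear_combination h')
        · exact Or.inr (by linear_combination h')
      · rintro (rfl | rfl) <;>
        · push_cast
          push_cast at hsq
          linear_combination (1/4 : ℂ) * hsq
    · push_cast
      push_cast at hsq
      linear_combination (-1/4 : ℂ) * hsq
  · push_neg at hDpos
    have h4b : 0 ≤ 4 * b - c ^ 2 := by linarith
    have hsq : (((Real.sqrt (4 * b - c ^ 2) : ℝ) : ℂ) * Complex.I) ^ 2
        = (c : ℂ) ^ 2 - 4 * (b : ℂ) := by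
      rw [mul_pow, Complex.I_sq, ← Complex.ofReal_pow, Real.sq_sqrt h4b]; push_cast; ring
    set s := Real.sqrt (4 * b - c ^ 2) with hs
    have habs : ∀ t : ℝ, ‖((c : ℂ) + (t : ℂ) * Complex.I) / 2‖ ^ 2
        = (c ^ 2 + t ^ 2) / 4 := by
      intro t
      rw [norm_div, div_pow, Complex.sq_norm]
      have h : ((c : ℂ) + (t : ℂ) * Complex.I) = Complex.mk c t := by
        apply Complex.ext <;> simp
      rw [h]
      simp [Complex.normSq_mk, Complex.norm_two]
      ring
    have hs2 : s ^ 2 = 4 * b - c ^ 2 := Real.sq_sqrt h4b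
    refine ⟨((c : ℂ) + (s : ℂ) * Complex.I) / 2, ((c : ℂ) + ((-s : ℝ) : ℂ) * Complex.I) / 2,
      ?_, ?_, fun h => absurd h (not_le.2 hDpos), fun _ => ?_⟩
    · intro lam
      constructor
      · intro h
        have hfac : (lam - ((c : ℂ) + (s : ℂ) * Complex.I) / 2) *
            (lam - ((c : ℂ) + ((-s : ℝ) : ℂ) * Complex.I) / 2) = 0 := by
          push_cast
          linear_combination h - (1/4 : ℂ) * hsq
        rcases mul_eq_zero.1 hfac with h' | h'
        · exact Or.inl (by linear_combination h')
        · exact Or.inr (by linear_combination h')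
      · rintro (rfl | rfl) <;> · push_cast; linear_combination (1/4 : ℂ) * hsq
    · push_cast; linear_combination (-1/4 : ℂ) * hsq
    · refine ⟨by rw [habs s, hs2]; ring, ?_⟩
      rw [habs (-s)]
      rw [neg_pow, hs2]  -- (-s)^2 = s^2
      ring

lemma quad_abs_le (c b r : ℝ) (hr : 0 < r)
    (hall : ∀ lam : ℂ, lam ^ 2 - (c : ℂ) * lam + (b : ℝ) = 0 → ‖lam‖ ≤ r) :
    |b| ≤ r ^ 2 ∧ 0 ≤ r ^ 2 - r * |c| + b := by
  obtain ⟨r₁, r₂, hiff, hprod, hpos, hneg⟩ := quad_factor c b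
  have h1 : ‖r₁‖ ≤ r := hall r₁ ((hiff r₁).2 (Or.inl rfl))
  have h2 : ‖r₂‖ ≤ r := hall r₂ ((hiff r₂).2 (Or.inr rfl))
  have habs1 : (0:ℝ) ≤ ‖r₁‖ := norm_nonneg _
  have habs2 : (0:ℝ) ≤ ‖r₂‖ := norm_nonneg _
  have hb : |b| ≤ r ^ 2 := by
    have : |b| = ‖r₁‖ * ‖r₂‖ := by
      rw [← norm_mul, hprod, Complex.norm_real, Real.norm_eq_abs]
    rw [this]
    nlinarith
  refine ⟨hb, ?_⟩
  by_cases hD : 0 ≤ c ^ 2 - 4 * b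
  · obtain ⟨e1, e2⟩ := hpos hD
    have hs2 : Real.sqrt (c ^ 2 - 4 * b) ^ 2 = c ^ 2 - 4 * b := Real.sq_sqrt hD
    have hsnn : 0 ≤ Real.sqrt (c ^ 2 - 4 * b) := Real.sqrt_nonneg _
    rw [e1, Complex.norm_real, Real.norm_eq_abs] at h1
    rw [e2, Complex.norm_real, Real.norm_eq_abs] at h2
    have h1' := abs_le.1 h1
    have h2' := abs_le.1 h2
    have hsd : Real.sqrt (c ^ 2 - 4 * b) ≤ 2 * r - |c| := by
      rcases abs_cases c with ⟨hc, _⟩ | ⟨hc, _⟩ <;> [skip; skip] <;> rw [hc] <;> linarith [h1'.2, h2'.1]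
    have hsq2 : Real.sqrt (c ^ 2 - 4 * b) * Real.sqrt (c ^ 2 - 4 * b)
        ≤ (2 * r - |c|) * (2 * r - |c|) := mul_self_le_mul_self hsnn hsd
    nlinarith [hs2, sq_abs c]
  · push_neg at hD
    obtain ⟨e1, _⟩ := hneg hD
    nlinarith [sq_abs c, hD, sq_nonneg (r - |c| / 2)]

lemma quad_abs_eq (c b : ℝ) (hD : c ^ 2 - 4 * b ≤ 0)
    (lam : ℂ) (h : lam ^ 2 - (c : ℂ) * lam + (b : ℝ) = 0) : ‖lam‖ ^ 2 = b := by
  obtain ⟨r₁, r₂, hiff, hprod, hpos, hneg⟩ := quad_factor c b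
  rcases lt_or_eq_of_le hD with hlt | heq
  · obtain ⟨e1, e2⟩ := hneg hlt
    rcases (hiff lam).1 h with rfl | rfl <;> assumption
  · obtain ⟨e1, e2⟩ := hpos heq.ge
    rw [heq, Real.sqrt_zero] at e1 e2
    have hb : b = c ^ 2 / 4 := by linarith
    rcases (hiff lam).1 h with h' | h'
    · rw [h', e1, Complex.norm_real, Real.norm_eq_abs, sq_abs, hb]; ring
    · rw [h', e2, Complex.norm_real, Real.norm_eq_abs, sq_abs, hb]; ring


lemma core_opt (l L r q a b : ℝ) (hl : 0 < l) (hlL : l < L)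
    (hr0 : 0 < r) (hr1 : r < 1)
    (hq : q * (L + l) = L - l) (hid : (1 + r ^ 2) * q = 2 * r)
    (hb : |b| ≤ r ^ 2)
    (h1 : 0 ≤ r ^ 2 - r * |(1 + b) * (1 - a * l)| + b)
    (h2 : 0 ≤ r ^ 2 - r * |(1 + b) * (1 - a * L)| + b) :
    b = r ^ 2 ∧ a = 2 / (L + l) := by
  obtain ⟨hbl, hbu⟩ := abs_le.1 hb
  have h1b : 0 < 1 + b := by nlinarith
  have hA : r * ((1 + b) * (1 - a * l)) ≤ r ^ 2 + b := by
    have := le_abs_self ((1 + b) * (1 - a * l))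
    nlinarith
  have hB : r * ((1 + b) * (a * L - 1)) ≤ r ^ 2 + b := by
    have := neg_abs_le ((1 + b) * (1 - a * L))
    nlinarith
  have hkey : r * (1 + b) * (L - l) ≤ (r ^ 2 + b) * (L + l) := by
    nlinarith [mul_le_mul_of_nonneg_left hA (by linarith : (0:ℝ) ≤ L),
      mul_le_mul_of_nonneg_left hB (by linarith : (0:ℝ) ≤ l)]
  have hLl : 0 < L + l := by linarith
  have hkey2 : r * (1 + b) * q ≤ r ^ 2 + b := by
    have : r * (1 + b) * (q * (L + l)) ≤ (r ^ 2 + b) * (L + l) := by rw [hq]; linarith [hkey]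
    nlinarith
  have hbr : b = r ^ 2 := by
    by_contra hne
    have hblt : b < r ^ 2 := lt_of_le_of_ne hbu hne
    have h4 : r * (1 + b) * ((1 + r ^ 2) * q) ≤ (1 + r ^ 2) * (r ^ 2 + b) := by
      nlinarith [hkey2, sq_nonneg r]
    rw [hid] at h4
    have h5 : 0 < (r ^ 2 - b) * (1 - r ^ 2) :=
      mul_pos (by linarith) (by nlinarith)
    nlinarith [h4, h5]
  subst hbr
  refine ⟨rfl, ?_⟩
  have hq1 : (1 - q) * (L + l) = 2 * l := by linarith
  have hq2 : (1 + q) * (L + l) = 2 * L := by linarith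
  have h7 : r * ((1 + r ^ 2) * q) = 2 * r ^ 2 := by rw [hid]; ring
  have hA2 : 1 - a * l ≤ q := by
    have h5 : r * ((1 + r ^ 2) * (1 - a * l)) ≤ r * ((1 + r ^ 2) * q) := by
      rw [h7]; nlinarith [hA]
    have h6 := le_of_mul_le_mul_left h5 hr0
    exact le_of_mul_le_mul_left h6 (by positivity)
  have hB2 : a * L - 1 ≤ q := by
    have h5 : r * ((1 + r ^ 2) * (a * L - 1)) ≤ r * ((1 + r ^ 2) * q) := by
      rw [h7]; nlinarith [hB]
    have h6 := le_of_mul_le_mul_left h5 hr0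
    exact le_of_mul_le_mul_left h6 (by positivity)
  clear h1 h2 hA hB hkey hkey2 h7 hb hbl hbu h1b hid
  have hge : 2 ≤ a * (L + l) := by nlinarith [hA2, hq1, hl, hLl]
  have hle : a * (L + l) ≤ 2 := by nlinarith [hB2, hq2, hl, hlL, hLl]
  have heq : a * (L + l) = 2 := le_antisymm hle hge
  field_simp
  linarith [heq]

open Complex in
lemma TN_map {n : ℕ} (M : Matrix (Fin n) (Fin n) ℝ) (be : ℝ) :
    (TN M be).map Complex.ofReal =
      Matrix.fromBlocks (((1 + be : ℝ) : ℂ) • M.map Complex.ofReal)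
        (((-be : ℝ) : ℂ) • (1 : Matrix (Fin n) (Fin n) ℂ))
        (1 : Matrix (Fin n) (Fin n) ℂ) 0 := by
  ext i j
  rcases i with i | i <;> rcases j with j | j <;>
    simp [TN, Matrix.map_apply, Matrix.fromBlocks_apply₁₁, Matrix.fromBlocks_apply₁₂,
      Matrix.fromBlocks_apply₂₁, Matrix.fromBlocks_apply₂₂, Matrix.one_apply,
      apply_ite Complex.ofReal, Matrix.smul_apply]


open Complex Finset in
lemma symm_real_eig' {n : ℕ} (H : Matrix (Fin n) (Fin n) ℝ) (hsymm : H.IsSymm)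
    (z : ℂ) (v : Fin n → ℂ) (hv : v ≠ 0)
    (heig : (H.map Complex.ofReal).mulVec v = z • v) :
    z.im = 0 ∧ ∃ w : Fin n → ℝ, w ≠ 0 ∧ H.mulVec w = z.re • w := by
  have hsym' : ∀ i j, H j i = H i j := fun i j => hsymm.apply i j
  have hcomp : ∀ i, ∑ j, ((H i j : ℂ)) * v j = z * v i := by
    intro i
    have := congrFun heig i
    simpa [Matrix.mulVec, dotProduct, Matrix.map_apply] using this
  obtain ⟨i₀, hvi₀⟩ : ∃ i, v i ≠ 0 := Function.ne_iff.mp hv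
  -- z is real
  have him : z.im = 0 := by
    set aC : ℂ := ∑ i, (starRingEnd ℂ) (v i) * v i with haCdef
    have haC_eq : aC = ((∑ i, Complex.normSq (v i) : ℝ) : ℂ) := by
      rw [haCdef]
      push_cast
      congr 1
      funext i
      rw [mul_comm, Complex.mul_conj]
    have ha_pos : (0:ℝ) < ∑ i, Complex.normSq (v i) :=
      Finset.sum_pos' (fun i _ => Complex.normSq_nonneg _)
        ⟨i₀, Finset.mem_univ i₀, Complex.normSq_pos.2 hvi₀⟩
    have haC_ne : aC ≠ 0 := by
      rw [haC_eq]
      exact_mod_cast ne_of_gt ha_pos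
    have haC_conj : (starRingEnd ℂ) aC = aC := by
      rw [haCdef, map_sum]
      congr 1
      funext i
      rw [map_mul, Complex.conj_conj]
      ring
    set S : ℂ := ∑ i, ∑ j, (starRingEnd ℂ) (v i) * (((H i j : ℝ) : ℂ) * v j) with hSdef
    have hS : S = z * aC := by
      rw [hSdef, haCdef, Finset.mul_sum]
      congr 1
      funext i
      rw [← Finset.mul_sum, hcomp i]
      ring
    have hconjS : (starRingEnd ℂ) S = S := by
      rw [hSdef, map_sum]
      rw [Finset.sum_comm]
      congr 1
      funext i
      rw [map_sum]
      congr 1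
      funext j
      rw [map_mul, map_mul, Complex.conj_conj, Complex.conj_ofReal, hsym' i j]
      ring
    have : (starRingEnd ℂ) z * aC = z * aC := by
      have h1 := hconjS
      rw [hS, map_mul, haC_conj] at h1
      exact h1
    have hz : (starRingEnd ℂ) z = z := mul_right_cancel₀ haC_ne this
    exact Complex.conj_eq_iff_im.mp hz
  -- real eigenvector
  have hre : ∀ i, H.mulVec (fun j => (v j).re) i = z.re * (v i).re := by
    intro i
    have h := congrArg Complex.re (hcomp i)
    rw [Complex.re_sum] at h
    simp only [Complex.mul_re, Complex.ofReal_re, Complex.ofReal_im, zero_mul, sub_zero] at h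
    rw [Matrix.mulVec, dotProduct]
    rw [h, him]
    ring
  have hIm : ∀ i, H.mulVec (fun j => (v j).im) i = z.re * (v i).im := by
    intro i
    have h := congrArg Complex.im (hcomp i)
    rw [Complex.im_sum] at h
    simp only [Complex.mul_im, Complex.ofReal_re, Complex.ofReal_im, zero_mul, add_zero] at h
    rw [Matrix.mulVec, dotProduct]
    rw [h, him]
    ring
  refine ⟨him, ?_⟩
  by_cases hre0 : (v i₀).re ≠ 0
  · refine ⟨fun j => (v j).re, fun h => hre0 (congrFun h i₀), ?_⟩
    funext i
    rw [hre i]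
    simp [Pi.smul_apply, smul_eq_mul]
  · push_neg at hre0
    have him0 : (v i₀).im ≠ 0 := by
      intro h
      exact hvi₀ (Complex.ext hre0 h)
    refine ⟨fun j => (v j).im, fun h => him0 (congrFun h i₀), ?_⟩
    funext i
    rw [hIm i]
    simp [Pi.smul_apply, smul_eq_mul]

open Complex in
lemma cast_mulVec {n : ℕ} (H : Matrix (Fin n) (Fin n) ℝ) (w : Fin n → ℝ) (μ : ℝ)
    (h : H.mulVec w = μ • w) :
    (H.map Complex.ofReal).mulVec (fun j => ((w j : ℝ) : ℂ)) = (μ : ℂ) • (fun j => ((w j : ℝ) : ℂ)) := by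
  funext i
  have hi := congrFun h i
  rw [Matrix.mulVec, dotProduct] at hi ⊢
  simp only [Matrix.map_apply, Pi.smul_apply, smul_eq_mul] at hi ⊢
  push_cast
  exact_mod_cast congrArg Complex.ofReal hi

lemma pi_smul_fun {n : ℕ} (c : ℂ) (u : Fin n → ℂ) : (fun j => c * u j) = c • u := rfl

open Complex in
lemma TN_eig_iff {n : ℕ} (H : Matrix (Fin n) (Fin n) ℝ) (hsymm : H.IsSymm)
    (l : ℝ) (hleig : ∃ v : Fin n → ℝ, v ≠ 0 ∧ H.mulVec v = l • v)
    (al be : ℝ) (hal : al ≠ 0) (lam : ℂ) :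
    IsCEigenvalue (TN ((1 : Matrix (Fin n) (Fin n) ℝ) - al • H) be) lam ↔
    ∃ μ : ℝ, (∃ w : Fin n → ℝ, w ≠ 0 ∧ H.mulVec w = μ • w) ∧
      lam ^ 2 - (((1 + be) * (1 - al * μ) : ℝ) : ℂ) * lam + ((be : ℝ) : ℂ) = 0 := by
  set M : Matrix (Fin n) (Fin n) ℝ := (1 : Matrix (Fin n) (Fin n) ℝ) - al • H with hM
  set MC := M.map Complex.ofReal with hMCdef
  have hMC : MC = (1 : Matrix (Fin n) (Fin n) ℂ) - ((al : ℝ) : ℂ) • H.map Complex.ofReal := by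
    ext i j
    simp [hMCdef, hM, Matrix.map_apply, Matrix.sub_apply, Matrix.smul_apply, Matrix.one_apply,
      apply_ite Complex.ofReal]
  have halC : (al : ℂ) ≠ 0 := by exact_mod_cast hal
  constructor
  · rintro ⟨v, hv0, hveq⟩
    rw [TN_map, Matrix.fromBlocks_mulVec] at hveq
    set x : Fin n → ℂ := v ∘ Sum.inl with hx
    set y : Fin n → ℂ := v ∘ Sum.inr with hy
    have hxe : ∀ i, v (Sum.inl i) = x i := fun _ => rfl
    have hye : ∀ i, v (Sum.inr i) = y i := fun _ => rfl
    have htop : ∀ i, (1 + (be:ℂ)) * MC.mulVec x i - (be:ℂ) * y i = lam * x i := by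
      intro i
      have h := congrFun hveq (Sum.inl i)
      simp only [Sum.elim_inl, Pi.add_apply, Matrix.smul_mulVec, Pi.smul_apply,
        smul_eq_mul, Pi.smul_apply, Matrix.one_mulVec] at h
      push_cast at h
      rw [hxe i] at h
      linear_combination h
    have hbot : ∀ i, x i = lam * y i := by
      intro i
      have h := congrFun hveq (Sum.inr i)
      simp only [Sum.elim_inr, Pi.add_apply, Matrix.one_mulVec, Matrix.zero_mulVec,
        Pi.zero_apply, Pi.smul_apply, smul_eq_mul, add_zero] at h
      rw [hye i] at h
      exact h
    have hvsplit : ∀ _ : (∀ i, x i = 0) ∧ (∀ i, y i = 0), False := by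
      rintro ⟨h1, h2⟩
      apply hv0
      funext k
      rcases k with k | k
      · exact h1 k
      · exact h2 k
    by_cases hlam : lam = 0
    · subst hlam
      have hx0 : ∀ i, x i = 0 := fun i => by rw [hbot i]; ring
      have hy0 : ¬ (∀ i, y i = 0) := fun h => hvsplit ⟨hx0, h⟩
      have hMx0 : ∀ i, MC.mulVec x i = 0 := by
        intro i
        have : x = 0 := funext hx0
        rw [this, Matrix.mulVec_zero]
        rfl
      have hbe0 : (be : ℝ) = 0 := by
        by_contra hbe
        apply hy0
        intro i
        have h := htop i
        rw [hMx0 i, hx0 i] at h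
        have hbeC : (be : ℂ) ≠ 0 := by exact_mod_cast hbe
        have h2 : (be:ℂ) * y i = 0 := by linear_combination -h
        exact (mul_eq_zero.1 h2).resolve_left hbeC
      exact ⟨l, hleig, by rw [hbe0]; push_cast; ring⟩
    · have hy0 : ¬ (∀ i, y i = 0) := by
        intro h
        apply hvsplit
        exact ⟨fun i => by rw [hbot i, h i]; ring, h⟩
      have hyne : y ≠ 0 := fun h => hy0 (fun i => congrFun h i)
      have hMxy : ∀ i, ((1 + (be:ℂ)) * lam) * MC.mulVec y i = (lam ^ 2 + (be:ℂ)) * y i := by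
        intro i
        have h1 : MC.mulVec x i = lam * MC.mulVec y i := by
          have hxy : x = lam • y := funext fun i => hbot i
          rw [hxy, Matrix.mulVec_smul]
          rfl
        have h2 := htop i
        rw [h1, hbot i] at h2
        linear_combination h2
      by_cases hbe : (1 + be : ℝ) = 0
      · have hbeC : (1 + (be:ℂ)) = 0 := by exact_mod_cast hbe
        have hsq : lam ^ 2 + (be:ℂ) = 0 := by
          by_contra hne
          apply hy0
          intro i
          have h := hMxy i
          rw [hbeC] at h
          simp only [zero_mul] at h
          exact (mul_eq_zero.1 h.symm).resolve_left hne
        refine ⟨l, hleig, ?_⟩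
        have : ((1 + be) * (1 - al * l) : ℝ) = 0 := by rw [hbe]; ring
        rw [this]
        push_cast
        linear_combination hsq
      · have hbeC : (1 + (be:ℂ)) ≠ 0 := fun h => hbe (by exact_mod_cast h)
        have hk : ((1 + (be:ℂ)) * lam) ≠ 0 := mul_ne_zero hbeC hlam
        obtain ⟨zz, hzz⟩ : ∃ z : ℂ,
            z = (1 - (lam ^ 2 + (be:ℂ)) / ((1 + (be:ℂ)) * lam)) / (al:ℂ) := ⟨_, rfl⟩
        have hHy : (H.map Complex.ofReal).mulVec y = zz • y := by
          funext i
          have h := hMxy i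
          have h2 : MC.mulVec y i
              = y i - (al:ℂ) * (H.map Complex.ofReal).mulVec y i := by
            rw [hMC]
            simp [Matrix.sub_mulVec, Matrix.one_mulVec, Matrix.smul_mulVec]
          rw [h2] at h
          simp only [Pi.smul_apply, smul_eq_mul, hzz]
          field_simp
          linear_combination -h
        obtain ⟨him, w, hw0, hww⟩ := symm_real_eig' H hsymm _ y hyne hHy
        refine ⟨zz.re, ⟨w, hw0, hww⟩, ?_⟩
        have hzzre : ((zz.re : ℝ) : ℂ) = zz := by
          apply Complex.ext
          · simp
          · simp [him]
        have h5 : (al:ℂ) * zz * ((1 + (be:ℂ)) * lam)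
            = (1 + (be:ℂ)) * lam - (lam ^ 2 + (be:ℂ)) := by
          rw [hzz]
          field_simp
        push_cast
        rw [hzzre]
        linear_combination h5
  · rintro ⟨μ, ⟨w, hw0, hww⟩, hroot⟩
    obtain ⟨i₀, hwi₀⟩ : ∃ i, w i ≠ 0 := Function.ne_iff.mp hw0
    set wC : Fin n → ℂ := fun j => ((w j : ℝ) : ℂ) with hwC
    have hHw : (H.map Complex.ofReal).mulVec wC = (μ : ℂ) • wC := cast_mulVec H w μ hww
    have hMw : ∀ i, MC.mulVec wC i = ((1 - al * μ : ℝ) : ℂ) * wC i := by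
      intro i
      rw [hMC]
      simp only [Matrix.sub_mulVec, Matrix.one_mulVec, Matrix.smul_mulVec, hHw,
        Pi.sub_apply, Pi.smul_apply, smul_eq_mul]
      push_cast
      ring
    push_cast at hroot
    refine ⟨Sum.elim (fun i => lam * wC i) wC, ?_, ?_⟩
    · intro h
      apply hwi₀
      have h2 := congrFun h (Sum.inr i₀)
      simp only [Sum.elim_inr, Pi.zero_apply, hwC] at h2
      exact_mod_cast h2
    · rw [TN_map, Matrix.fromBlocks_mulVec]
      funext idx
      have hcl : (Sum.elim (fun i => lam * wC i) wC) ∘ Sum.inl = fun i => lam * wC i := rfl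
      have hcr : (Sum.elim (fun i => lam * wC i) wC) ∘ Sum.inr = wC := rfl
      rcases idx with i | i
      · simp only [Sum.elim_inl, Pi.add_apply, hcl, hcr, Pi.smul_apply, smul_eq_mul,
          Matrix.smul_mulVec, Matrix.one_mulVec]
        rw [pi_smul_fun lam wC, Matrix.mulVec_smul]
        simp only [Pi.smul_apply, smul_eq_mul]
        rw [hMw i]
        push_cast
        linear_combination (-(wC i)) * hroot
      · simp only [Sum.elim_inr, Pi.add_apply, hcl, hcr, Matrix.one_mulVec,
          Matrix.zero_mulVec, Pi.zero_apply, Pi.smul_apply, smul_eq_mul]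
        ring

set_option maxHeartbeats 2000000 in
theorem stmt16 (n : ℕ) (H : Matrix (Fin n) (Fin n) ℝ) (hsymm : H.IsSymm) (hpd : H.PosDef)
    (ℓ L : ℝ) (hℓ : 0 < ℓ) (hℓL : ℓ < L)
    (hℓeig : ∃ v : Fin n → ℝ, v ≠ 0 ∧ H.mulVec v = ℓ • v)
    (hLeig : ∃ v : Fin n → ℝ, v ≠ 0 ∧ H.mulVec v = L • v)
    (hext : ∀ μ : ℝ, (∃ v : Fin n → ℝ, v ≠ 0 ∧ H.mulVec v = μ • v) → ℓ ≤ μ ∧ μ ≤ L)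
    (κ : ℝ) (hκ : κ = L / ℓ) :
    (∀ α β : ℝ, 0 < α →
      (Real.sqrt κ - 1) / (Real.sqrt κ + 1)
        ≤ specRad (TN ((1 : Matrix (Fin n) (Fin n) ℝ) - α • H) β)) ∧
    specRad (TN ((1 : Matrix (Fin n) (Fin n) ℝ) - (2 / (L + ℓ)) • H)
        (((Real.sqrt κ - 1) / (Real.sqrt κ + 1)) ^ 2))
      = (Real.sqrt κ - 1) / (Real.sqrt κ + 1) ∧
    (∀ α β : ℝ, 0 < α →
      specRad (TN ((1 : Matrix (Fin n) (Fin n) ℝ) - α • H) β)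
          = (Real.sqrt κ - 1) / (Real.sqrt κ + 1) →
        α = 2 / (L + ℓ) ∧ β = ((Real.sqrt κ - 1) / (Real.sqrt κ + 1)) ^ 2) ∧
    (Real.sqrt κ - 1) / (Real.sqrt κ + 1) < 1 - Real.sqrt (4 * ℓ / (3 * L + ℓ)) := by
  set t : ℝ := Real.sqrt κ with htdef
  set r : ℝ := (t - 1) / (t + 1) with hrdef
  have hκ1 : 1 < κ := by rw [hκ]; exact (one_lt_div hℓ).2 hℓL
  have ht1 : 1 < t := by
    rw [htdef]
    have := (Real.lt_sqrt (by norm_num : (0:ℝ) ≤ 1)).2 (by nlinarith : (1:ℝ)^2 < κ)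
    exact this
  have ht2 : t ^ 2 = κ := Real.sq_sqrt (by linarith)
  have hL : L = t ^ 2 * ℓ := by
    rw [ht2, hκ]
    field_simp
  have hr0 : 0 < r := div_pos (by linarith) (by linarith)
  have hr1 : r < 1 := by rw [hrdef, div_lt_one (by linarith)]; linarith
  set q : ℝ := (L - ℓ) / (L + ℓ) with hqdef
  have hLl : 0 < L + ℓ := by linarith
  have hq : q * (L + ℓ) = L - ℓ := by rw [hqdef]; field_simp
  have hid : (1 + r ^ 2) * q = 2 * r := by
    rw [hrdef, hqdef, hL]
    have h1 : t + 1 ≠ 0 := by linarith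
    have h2 : t ^ 2 * ℓ + ℓ ≠ 0 := by nlinarith
    field_simp
    ring
  have hspec : ∀ (A : Matrix (Fin n ⊕ Fin n) (Fin n ⊕ Fin n) ℝ),
      specRad A = sSup {x : ℝ | ∃ lam : ℂ, IsCEigenvalue A lam ∧ x = ‖lam‖} :=
    fun A => rfl
  -- boundedness of the eigenvalue-modulus set
  have hbdd : ∀ (α β : ℝ), 0 < α → BddAbove
      {x : ℝ | ∃ lam : ℂ, IsCEigenvalue (TN ((1 : Matrix (Fin n) (Fin n) ℝ) - α • H) β) lam
        ∧ x = ‖lam‖} := by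
    intro α β hα
    refine ⟨(1 + |β|) * (1 + α * L) + |β| + 1, ?_⟩
    rintro x ⟨lam, hlam, rfl⟩
    obtain ⟨μ, hEμ, hquad⟩ := (TN_eig_iff H hsymm ℓ hℓeig α β hα.ne' lam).1 hlam
    obtain ⟨hμl, hμL⟩ := hext μ hEμ
    have h2 : lam ^ 2 = (((1 + β) * (1 - α * μ) : ℝ) : ℂ) * lam - ((β:ℝ):ℂ) := by
      linear_combination hquad
    have h1 : ‖lam‖ ^ 2 ≤ |(1 + β) * (1 - α * μ)| * ‖lam‖ + |β| := by
      calc ‖lam‖ ^ 2 = ‖(lam ^ 2)‖ := (norm_pow _ _).symm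
        _ = ‖((((1 + β) * (1 - α * μ) : ℝ) : ℂ) * lam - ((β:ℝ):ℂ))‖ := by rw [h2]
        _ ≤ ‖((((1 + β) * (1 - α * μ) : ℝ) : ℂ) * lam)‖ + ‖((β:ℝ):ℂ)‖ :=
            norm_sub_le _ _
        _ = |(1 + β) * (1 - α * μ)| * ‖lam‖ + |β| := by
            rw [norm_mul, Complex.norm_real, Real.norm_eq_abs, Complex.norm_real, Real.norm_eq_abs]
    have hc : |(1 + β) * (1 - α * μ)| ≤ (1 + |β|) * (1 + α * L) := by
      rw [abs_mul]
      have hb1 : |1 + β| ≤ 1 + |β| := (abs_add_le 1 β).trans (by simp)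
      have hm : |1 - α * μ| ≤ 1 + α * L := by
        rw [abs_le]
        constructor
        · nlinarith [mul_le_mul_of_nonneg_left hμL hα.le]
        · nlinarith [mul_le_mul_of_nonneg_left hμl hα.le, mul_pos hα hℓ]
      exact mul_le_mul hb1 hm (abs_nonneg _) (by positivity)
    have hX0 : (0:ℝ) ≤ ‖lam‖ := norm_nonneg _
    have hB0 : (0:ℝ) ≤ |β| := abs_nonneg β
    have hC1 : (1:ℝ) ≤ (1 + |β|) * (1 + α * L) := by
      nlinarith [mul_pos hα (hℓ.trans hℓL)]
    have h3 : ‖lam‖ ^ 2 ≤ (1 + |β|) * (1 + α * L) * ‖lam‖ + |β| := by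
      nlinarith [h1, mul_le_mul_of_nonneg_right hc hX0]
    by_contra hgt
    push_neg at hgt
    have hx1 : 1 < ‖lam‖ := by nlinarith
    nlinarith [h3, mul_nonneg hB0 (by linarith : (0:ℝ) ≤ ‖lam‖ - 1),
      mul_pos (by linarith : (0:ℝ) < ‖lam‖)
        (by linarith : (0:ℝ) < ‖lam‖ - (1 + |β|) * (1 + α * L) - |β| - 1)]
  -- the optimal parameters give eigenvalue modulus r; membership of r
  have hql : 1 - (2 / (L + ℓ)) * ℓ = q := by rw [hqdef]; field_simp; ring
  have hqL : 1 - (2 / (L + ℓ)) * L = -q := by rw [hqdef]; field_simp; ring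
  have hαs : (0:ℝ) < 2 / (L + ℓ) := by positivity
  have hcl : ((1 + r ^ 2) * (1 - (2 / (L + ℓ)) * ℓ) : ℝ) = 2 * r := by rw [hql]; exact hid
  have hrin : r ∈ {x : ℝ | ∃ lam : ℂ,
      IsCEigenvalue (TN ((1 : Matrix (Fin n) (Fin n) ℝ) - (2 / (L + ℓ)) • H) (r ^ 2)) lam
        ∧ x = ‖lam‖} := by
    refine ⟨(r : ℂ), ?_, by rw [Complex.norm_real, Real.norm_eq_abs, abs_of_pos hr0]⟩
    refine (TN_eig_iff H hsymm ℓ hℓeig _ _ hαs.ne' _).2 ⟨ℓ, hℓeig, ?_⟩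
    rw [show ((1 + r ^ 2) * (1 - (2 / (L + ℓ)) * ℓ) : ℝ) = 2 * r from hcl]
    push_cast
    ring
  -- main bound/uniqueness argument
  have hcore : ∀ α β : ℝ, 0 < α →
      (∀ x ∈ {x : ℝ | ∃ lam : ℂ,
        IsCEigenvalue (TN ((1 : Matrix (Fin n) (Fin n) ℝ) - α • H) β) lam
          ∧ x = ‖lam‖}, x ≤ r) →
      β = r ^ 2 ∧ α = 2 / (L + ℓ) := by
    intro α β hα hall
    have hroots : ∀ (μ : ℝ), (∃ v : Fin n → ℝ, v ≠ 0 ∧ H.mulVec v = μ • v) →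
        ∀ lam : ℂ, lam ^ 2 - (((1 + β) * (1 - α * μ) : ℝ) : ℂ) * lam + ((β:ℝ):ℂ) = 0 →
          ‖lam‖ ≤ r := by
      intro μ hE lam hroot
      exact hall _ ⟨lam, (TN_eig_iff H hsymm ℓ hℓeig α β hα.ne' lam).2 ⟨μ, hE, hroot⟩, rfl⟩
    obtain ⟨hb1, hc1⟩ := quad_abs_le ((1 + β) * (1 - α * ℓ)) β r hr0 (hroots ℓ hℓeig)
    obtain ⟨_, hc2⟩ := quad_abs_le ((1 + β) * (1 - α * L)) β r hr0 (hroots L hLeig)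
    exact core_opt ℓ L r q α β hℓ hℓL hr0 hr1 hq hid hb1 hc1 hc2
  refine ⟨?_, ?_, ?_, ?_⟩
  · -- part 1 : lower bound
    intro α β hα
    by_contra hcon
    push_neg at hcon
    have hall : ∀ x ∈ {x : ℝ | ∃ lam : ℂ,
        IsCEigenvalue (TN ((1 : Matrix (Fin n) (Fin n) ℝ) - α • H) β) lam
          ∧ x = ‖lam‖}, x ≤ r := by
      intro x hx
      have := le_csSup (hbdd α β hα) hx
      rw [← hspec] at this
      linarith
    obtain ⟨hβ, hα'⟩ := hcore α β hα hall
    subst hβ hα'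
    have := le_csSup (hbdd _ _ hαs) hrin
    rw [← hspec] at this
    linarith
  · -- part 2 : value at the optimum
    have hSSeq : {x : ℝ | ∃ lam : ℂ,
        IsCEigenvalue (TN ((1 : Matrix (Fin n) (Fin n) ℝ) - (2 / (L + ℓ)) • H) (r ^ 2)) lam
          ∧ x = ‖lam‖} = {r} := by
      apply Set.eq_singleton_iff_unique_mem.2
      refine ⟨hrin, ?_⟩
      rintro x ⟨lam, hlam, rfl⟩
      obtain ⟨μ, hEμ, hquad⟩ := (TN_eig_iff H hsymm ℓ hℓeig _ _ hαs.ne' lam).1 hlam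
      obtain ⟨hμl, hμL⟩ := hext μ hEμ
      have h1 : 1 - (2 / (L + ℓ)) * μ ≤ q := by
        have := mul_le_mul_of_nonneg_left hμl hαs.le
        linarith [hql]
      have h2 : -q ≤ 1 - (2 / (L + ℓ)) * μ := by
        have := mul_le_mul_of_nonneg_left hμL hαs.le
        linarith [hqL]
      have habs2 : (1 - (2 / (L + ℓ)) * μ) ^ 2 ≤ q ^ 2 := by nlinarith
      have hD : ((1 + r ^ 2) * (1 - (2 / (L + ℓ)) * μ)) ^ 2 - 4 * (r ^ 2) ≤ 0 := by
        nlinarith [habs2, sq_nonneg (1 + r ^ 2), hid]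
      have hX := quad_abs_eq _ _ hD lam hquad
      rw [← Real.sqrt_sq (norm_nonneg lam), hX, Real.sqrt_sq hr0.le]
    rw [hspec, hSSeq]
    exact csSup_singleton r
  · -- part 3 : uniqueness
    intro α β hα heq
    have hall : ∀ x ∈ {x : ℝ | ∃ lam : ℂ,
        IsCEigenvalue (TN ((1 : Matrix (Fin n) (Fin n) ℝ) - α • H) β) lam
          ∧ x = ‖lam‖}, x ≤ r := by
      intro x hx
      have := le_csSup (hbdd α β hα) hx
      rw [← hspec, heq] at this
      exact this
    obtain ⟨hβ, hα'⟩ := hcore α β hα hall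
    exact ⟨hα', hβ⟩
  · -- part 4 : strict inequality
    have h1r : 1 - r = 2 / (t + 1) := by
      rw [hrdef]
      field_simp
      ring
    have hs : Real.sqrt (4 * ℓ / (3 * L + ℓ)) < 1 - r := by
      rw [h1r, Real.sqrt_lt' (by positivity)]
      rw [hL, div_pow, div_lt_div_iff₀ (by nlinarith) (by positivity)]
      nlinarith [ht1, hℓ, mul_pos hℓ (mul_pos (sub_pos.2 ht1) (show (0:ℝ) < t by linarith))]
    linarith
end
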